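/- arXiv:1206.3591 — 3 statements merged into one kernel-verified Lean document; each statement's English description precedes it below -/
import Mathlib

section
/- For a forest F with n vertices and c components (n ≥ c ≥ 1), the number of partitions of the vertex set of F into k non-empty independent sets equals Σ_{i≥0} C(c-1, i) · S(n-1-i, k-1), where S(·,·) denotes the Stirling numbers of the second kind. -/
open Finset SimpleGraph Polynomial

/-- Stirling numbers of the second kind. -/
def stirling2 : ℕ → ℕ → ℕ
  | 0, 0 => 1
  | 0, _ + 1 => 0
  | _ + 1, 0 => 0
  | n + 1, k + 1 => (k + 1) * stirling2 n (k + 1) + stirling2 n k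

/-- Bell numbers. -/
def bell (n : ℕ) : ℕ := ∑ k ∈ Finset.range (n + 1), stirling2 n k

/-- `graphStirling G k` is the number of partitions of the vertex set of `G`
into exactly `k` non-empty independent sets. -/
noncomputable def graphStirling {V : Type} [Fintype V] [DecidableEq V] (G : SimpleGraph V) (k : ℕ) : ℕ :=
  Nat.card {P : Finpartition (Finset.univ : Finset V) //
    P.parts.card = k ∧ ∀ p ∈ P.parts, ∀ u ∈ p, ∀ v ∈ p, ¬ G.Adj u v}

/-- The number of proper colorings of `G` with `x` colors
(the chromatic polynomial evaluated at `x`). -/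
noncomputable def chromaticCount {V : Type} [Fintype V] (G : SimpleGraph V) (x : ℕ) : ℕ :=
  Nat.card {f : V → Fin x // ∀ u v, G.Adj u v → f u ≠ f v}

lemma stirling2_succ_zero (n : ℕ) : stirling2 (n+1) 0 = 0 := rfl
lemma stirling2_succ_succ (n k : ℕ) :
    stirling2 (n+1) (k+1) = (k+1) * stirling2 n (k+1) + stirling2 n k := rfl

lemma stirling2_zero (k : ℕ) : stirling2 0 k = if k = 0 then 1 else 0 := by
  cases k <;> rfl

lemma stirling2_zero_right (n : ℕ) : stirling2 n 0 = if n = 0 then 1 else 0 := by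
  cases n <;> rfl

lemma stirling2_eq_sum (n k : ℕ) :
    stirling2 (n+1) (k+1) = ∑ i ∈ Finset.range (n+1), n.choose i * stirling2 (n-i) k := by
  induction n generalizing k with
  | zero => simp [stirling2_succ_succ, stirling2_zero]
  | succ n ih =>
    rcases k with _ | k'
    · rw [Finset.sum_eq_single (n+1)]
      · have h1 : ∀ m : ℕ, stirling2 (m+1) 1 = 1 := by
          intro m; induction m with
          | zero => rfl
          | succ m ihm => rw [stirling2_succ_succ, ihm]; rfl
        simp [h1]
        rfl
      · intro i hi hne
        have : n + 1 - i = (n - i) + 1 := by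
          simp at hi; omega
        rw [this, stirling2_succ_zero, mul_zero]
      · intro h; simp at h
    · -- key step
      have peel : ∑ i ∈ Finset.range (n+2), (n+1).choose i * stirling2 (n+1-i) (k'+1)
          = (∑ i ∈ Finset.range (n+1), (n+1).choose (i+1) * stirling2 (n-i) (k'+1))
            + stirling2 (n+1) (k'+1) := by
        rw [Finset.sum_range_succ']
        simp
      have pascal : ∀ i ∈ Finset.range (n+1),
          (n+1).choose (i+1) * stirling2 (n-i) (k'+1)
          = n.choose i * stirling2 (n-i) (k'+1) + n.choose (i+1) * stirling2 (n-i) (k'+1) := by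
        intro i _
        rw [Nat.choose_succ_succ, add_mul]
      have hT : ∑ i ∈ Finset.range (n+1), n.choose (i+1) * stirling2 (n-i) (k'+1)
          = (k'+1) * ∑ i ∈ Finset.range (n+1), n.choose i * stirling2 (n-i) (k'+1) := by
        -- A = sum over range (n+1) of C(n,i) * stirling2 ((n-i)+1) (k'+1)
        have hA : ∑ i ∈ Finset.range (n+1), n.choose i * stirling2 ((n-i)+1) (k'+1)
            = (k'+1) * (∑ i ∈ Finset.range (n+1), n.choose i * stirling2 (n-i) (k'+1))
              + stirling2 (n+1) (k'+1) := by
          have : ∀ i ∈ Finset.range (n+1), n.choose i * stirling2 ((n-i)+1) (k'+1)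
              = (k'+1) * (n.choose i * stirling2 (n-i) (k'+1)) + n.choose i * stirling2 (n-i) k' := by
            intro i _
            rw [stirling2_succ_succ]; ring
          rw [Finset.sum_congr rfl this, Finset.sum_add_distrib, ← Finset.mul_sum, ← ih k']
        have hA' : ∑ i ∈ Finset.range (n+1), n.choose i * stirling2 ((n-i)+1) (k'+1)
            = stirling2 (n+1) (k'+1)
              + ∑ i ∈ Finset.range n, n.choose (i+1) * stirling2 ((n-(i+1))+1) (k'+1) := by
          rw [Finset.sum_range_succ']
          simp [add_comm]
        have hshift : ∀ i ∈ Finset.range n, n.choose (i+1) * stirling2 ((n-(i+1))+1) (k'+1)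
            = n.choose (i+1) * stirling2 (n-i) (k'+1) := by
          intro i hi; simp at hi
          congr 2
          omega
        have hlast : ∑ i ∈ Finset.range (n+1), n.choose (i+1) * stirling2 (n-i) (k'+1)
            = ∑ i ∈ Finset.range n, n.choose (i+1) * stirling2 (n-i) (k'+1) := by
          rw [Finset.sum_range_succ, Nat.choose_succ_self, zero_mul, add_zero]
        rw [hlast, ← Finset.sum_congr rfl hshift]
        omega
      rw [stirling2_succ_succ, ih (k'+1), peel, Finset.sum_congr rfl pascal,
        Finset.sum_add_distrib, hT]
      ring


section PartiSection
variable {V : Type} [DecidableEq V]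

def IsPartn (G : SimpleGraph V) (s : Finset V) (k : ℕ) (C : Finset (Finset V)) : Prop :=
  C.card = k ∧ (∀ p ∈ C, p.Nonempty) ∧
    (∀ p ∈ C, ∀ q ∈ C, ∀ a : V, a ∈ p → a ∈ q → p = q) ∧
    C.biUnion id = s ∧ ∀ p ∈ C, ∀ a ∈ p, ∀ b ∈ p, ¬ G.Adj a b

open Classical in
noncomputable def parti (G : SimpleGraph V) (s : Finset V) (k : ℕ) : Finset (Finset (Finset V)) :=
  s.powerset.powerset.filter (IsPartn G s k)

lemma mem_parti {G : SimpleGraph V} {s : Finset V} {k : ℕ} {C : Finset (Finset V)} :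
    C ∈ parti G s k ↔ IsPartn G s k C := by
  classical
  rw [parti, Finset.mem_filter, Finset.mem_powerset]
  refine ⟨fun h => h.2, fun h => ⟨?_, h⟩⟩
  intro p hp
  rw [Finset.mem_powerset]
  intro a ha
  rw [← h.2.2.2.1]
  exact Finset.mem_biUnion.mpr ⟨p, hp, ha⟩

lemma parts_subset {G : SimpleGraph V} {s : Finset V} {k : ℕ} {C : Finset (Finset V)}
    (hC : C ∈ parti G s k) {p : Finset V} (hp : p ∈ C) : p ⊆ s := by
  intro a ha
  rw [← (mem_parti.1 hC).2.2.2.1]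
  exact Finset.mem_biUnion.mpr ⟨p, hp, ha⟩

section Surgery

variable {G : SimpleGraph V} {s : Finset V} {v : V} {k : ℕ}

lemma biUnion_erase_part {C : Finset (Finset V)} (hC : C ∈ parti G s k)
    {p₀ : Finset V} (hp₀ : p₀ ∈ C) : (C.erase p₀).biUnion id = s \ p₀ := by
  obtain ⟨hcard, hne, huniq, hunion, hindep⟩ := mem_parti.1 hC
  ext a
  simp only [Finset.mem_biUnion, Finset.mem_erase, Finset.mem_sdiff, id]
  constructor
  · rintro ⟨q, ⟨hqne, hq⟩, ha⟩
    refine ⟨hunion ▸ Finset.mem_biUnion.mpr ⟨q, hq, ha⟩, fun hap₀ => hqne (huniq q hq p₀ hp₀ a ha hap₀)⟩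
  · rintro ⟨has, hap₀⟩
    rw [← hunion] at has
    obtain ⟨q, hq, ha⟩ := Finset.mem_biUnion.mp has
    exact ⟨q, ⟨fun h => hap₀ (h ▸ ha), hq⟩, ha⟩

/-- inserting the singleton {v}. -/
lemma insert_singleton_mem (hv : v ∈ s) {C : Finset (Finset V)}
    (hC : C ∈ parti G (s.erase v) k) : insert {v} C ∈ parti G s (k+1) := by
  obtain ⟨hcard, hne, huniq, hunion, hindep⟩ := mem_parti.1 hC
  have hvnot : ∀ p ∈ C, v ∉ p := fun p hp hvp =>
    (Finset.notMem_erase v s) (parts_subset hC hp hvp)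
  have hsing : ({v} : Finset V) ∉ C := fun h => hvnot _ h (Finset.mem_singleton_self v)
  rw [mem_parti]
  refine ⟨?_, ?_, ?_, ?_, ?_⟩
  · rw [Finset.card_insert_of_notMem hsing, hcard]
  · intro p hp
    rcases Finset.mem_insert.1 hp with rfl | hp
    · exact ⟨v, Finset.mem_singleton_self v⟩
    · exact hne p hp
  · intro p hp q hq a hap haq
    rcases Finset.mem_insert.1 hp with rfl | hp <;> rcases Finset.mem_insert.1 hq with rfl | hq
    · rfl
    · exact absurd ((Finset.mem_singleton.1 hap) ▸ haq) (hvnot q hq)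
    · exact absurd ((Finset.mem_singleton.1 haq) ▸ hap) (hvnot p hp)
    · exact huniq p hp q hq a hap haq
  · rw [Finset.biUnion_insert, hunion]
    simp only [id]
    rw [← Finset.insert_eq, Finset.insert_erase hv]
  · intro p hp a ha b hb
    rcases Finset.mem_insert.1 hp with rfl | hp
    · rw [Finset.mem_singleton] at ha hb
      subst ha; subst hb
      exact G.irrefl
    · exact hindep p hp a ha b hb

/-- adding v to an allowed part. -/
lemma insert_part_mem (hv : v ∈ s) {C : Finset (Finset V)}
    (hC : C ∈ parti G (s.erase v) k) {p : Finset V} (hp : p ∈ C)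
    (hall : ∀ u ∈ p, ¬ G.Adj v u) :
    insert (insert v p) (C.erase p) ∈ parti G s k := by
  obtain ⟨hcard, hne, huniq, hunion, hindep⟩ := mem_parti.1 hC
  have hvnot : ∀ q ∈ C, v ∉ q := fun q hq hvq =>
    (Finset.notMem_erase v s) (parts_subset hC hq hvq)
  have hnotmem : insert v p ∉ C.erase p := fun h =>
    hvnot _ (Finset.mem_of_mem_erase h) (Finset.mem_insert_self v p)
  rw [mem_parti]
  refine ⟨?_, ?_, ?_, ?_, ?_⟩
  · rw [Finset.card_insert_of_notMem hnotmem, Finset.card_erase_of_mem hp, hcard]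
    have : 1 ≤ k := hcard ▸ Finset.card_pos.2 ⟨p, hp⟩
    omega
  · intro q hq
    rcases Finset.mem_insert.1 hq with rfl | hq
    · exact ⟨v, Finset.mem_insert_self v p⟩
    · exact hne q (Finset.mem_of_mem_erase hq)
  · intro q hq r hr a haq har
    rcases Finset.mem_insert.1 hq with rfl | hq <;> rcases Finset.mem_insert.1 hr with rfl | hr
    · rfl
    · rcases Finset.mem_insert.1 haq with hav | haq
      · exact absurd (hav ▸ har) (hvnot r (Finset.mem_of_mem_erase hr))
      · exact absurd (huniq p hp r (Finset.mem_of_mem_erase hr) a haq har)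
          (Finset.ne_of_mem_erase hr).symm
    · rcases Finset.mem_insert.1 har with hav | har
      · exact absurd (hav ▸ haq) (hvnot q (Finset.mem_of_mem_erase hq))
      · exact absurd (huniq p hp q (Finset.mem_of_mem_erase hq) a har haq)
          (Finset.ne_of_mem_erase hq).symm
    · exact huniq q (Finset.mem_of_mem_erase hq) r (Finset.mem_of_mem_erase hr) a haq har
  · rw [Finset.biUnion_insert, biUnion_erase_part hC hp]
    have hps : p ⊆ s.erase v := parts_subset hC hp
    ext a
    simp only [Finset.mem_union, Finset.mem_insert, Finset.mem_sdiff, id]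
    constructor
    · rintro (⟨rfl | hap⟩ | ⟨hase, _⟩)
      · exact hv
      · exact Finset.mem_of_mem_erase (hps hap)
      · exact Finset.mem_of_mem_erase hase
    · intro has
      by_cases hav : a = v
      · exact Or.inl (Or.inl hav)
      · by_cases hap : a ∈ p
        · exact Or.inl (Or.inr hap)
        · exact Or.inr ⟨Finset.mem_erase.2 ⟨hav, has⟩, hap⟩
  · intro q hq a ha b hb
    rcases Finset.mem_insert.1 hq with rfl | hq
    · rcases Finset.mem_insert.1 ha with hav | ha <;> rcases Finset.mem_insert.1 hb with hbv | hb
      · rw [hav, hbv]; exact G.irrefl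
      · rw [hav]; exact hall b hb
      · rw [hbv]; exact fun h => hall a ha h.symm
      · exact hindep p hp a ha b hb
    · exact hindep q (Finset.mem_of_mem_erase hq) a ha b hb

end Surgery


lemma parti_empty (G : SimpleGraph V) (k : ℕ) :
    parti G ∅ k = if k = 0 then {∅} else ∅ := by
  ext C
  rw [mem_parti]
  split
  · subst ‹k = 0›
    simp only [Finset.mem_singleton]
    constructor
    · rintro ⟨hcard, -, -, -, -⟩; exact Finset.card_eq_zero.mp hcard
    · rintro rfl; refine ⟨rfl, ?_, ?_, ?_, ?_⟩ <;> simp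
  · simp only [Finset.notMem_empty, iff_false]
    rintro ⟨hcard, hne, -, hunion, -⟩
    rcases C.eq_empty_or_nonempty with rfl | ⟨p, hp⟩
    · simp at hcard; exact ‹k ≠ 0› hcard.symm
    · obtain ⟨a, ha⟩ := hne p hp
      have : a ∈ (∅ : Finset V) := hunion ▸ Finset.mem_biUnion.mpr ⟨p, hp, ha⟩
      simp at this

lemma parti_zero_of_nonempty {G : SimpleGraph V} {s : Finset V} (hs : s.Nonempty) :
    parti G s 0 = ∅ := by
  ext C
  simp only [Finset.notMem_empty, iff_false, mem_parti]
  rintro ⟨hcard, -, -, hunion, -⟩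
  rw [Finset.card_eq_zero] at hcard
  subst hcard
  simp at hunion
  obtain ⟨a, ha⟩ := hs
  rw [← hunion] at ha
  simp at ha

section Surgery2
variable {G : SimpleGraph V} {s : Finset V} {v : V} {k : ℕ}

/-- the unique part containing a given vertex -/
lemma exists_part {C : Finset (Finset V)} (hC : C ∈ parti G s k) {a : V} (ha : a ∈ s) :
    ∃ p ∈ C, a ∈ p := by
  obtain ⟨-, -, -, hunion, -⟩ := mem_parti.1 hC
  rw [← hunion] at ha
  obtain ⟨p, hp, hap⟩ := Finset.mem_biUnion.mp ha
  exact ⟨p, hp, hap⟩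

lemma split_parti (hv : v ∈ s) {D : Finset (Finset V)} (hD : D ∈ parti G s (k+1)) :
    (∃ C ∈ parti G (s.erase v) k, D = insert {v} C) ∨
    (∃ C ∈ parti G (s.erase v) (k+1), ∃ p ∈ C, (∀ u ∈ p, ¬ G.Adj v u) ∧
      D = insert (insert v p) (C.erase p)) := by
  obtain ⟨hcard, hne, huniq, hunion, hindep⟩ := mem_parti.1 hD
  obtain ⟨p₀, hp₀, hvp₀⟩ := exists_part hD hv
  have hbue : (D.erase p₀).biUnion id = s \ p₀ := biUnion_erase_part hD hp₀
  by_cases hsing : p₀ = {v}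
  · left
    subst hsing
    refine ⟨D.erase {v}, ?_, (Finset.insert_erase hp₀).symm⟩
    rw [mem_parti]
    refine ⟨?_, fun p hp => hne p (Finset.mem_of_mem_erase hp),
      fun p hp q hq => huniq p (Finset.mem_of_mem_erase hp) q (Finset.mem_of_mem_erase hq),
      ?_, fun p hp => hindep p (Finset.mem_of_mem_erase hp)⟩
    · rw [Finset.card_erase_of_mem hp₀, hcard]; omega
    · rw [hbue, Finset.erase_eq]
    
  · right
    set q : Finset V := p₀.erase v with hq
    have hqne : q.Nonempty := by
      rcases (p₀.erase v).eq_empty_or_nonempty with he | h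
      · exfalso
        apply hsing
        apply Finset.Subset.antisymm
        · intro a ha
          rw [Finset.mem_singleton]
          by_contra hav
          have : a ∈ p₀.erase v := Finset.mem_erase.2 ⟨hav, ha⟩
          rw [he] at this; simp at this
        · intro a ha; rw [Finset.mem_singleton] at ha; exact ha ▸ hvp₀
      · exact h
    have hqsub : q ⊆ p₀ := Finset.erase_subset v p₀
    have hqnotmem : q ∉ D := by
      intro hqD
      obtain ⟨a, ha⟩ := hqne
      have heq := huniq q hqD p₀ hp₀ a ha (hqsub ha)
      have hvq : v ∉ q := Finset.notMem_erase v p₀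
      rw [← heq] at hvp₀
      exact hvq hvp₀
    set C : Finset (Finset V) := insert q (D.erase p₀) with hCdef
    have hqC : q ∈ C := Finset.mem_insert_self q _
    have hCmem : C ∈ parti G (s.erase v) (k+1) := by
      rw [mem_parti]
      have hqnotmem' : q ∉ D.erase p₀ := fun h => hqnotmem (Finset.mem_of_mem_erase h)
      refine ⟨?_, ?_, ?_, ?_, ?_⟩
      · rw [hCdef, Finset.card_insert_of_notMem hqnotmem', Finset.card_erase_of_mem hp₀, hcard]
        omega
      · intro p hp
        rcases Finset.mem_insert.1 hp with rfl | hp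
        · exact hqne
        · exact hne p (Finset.mem_of_mem_erase hp)
      · intro p hp r hr a hap har
        rcases Finset.mem_insert.1 hp with rfl | hp <;> rcases Finset.mem_insert.1 hr with rfl | hr
        · rfl
        · exact absurd ((huniq p₀ hp₀ r (Finset.mem_of_mem_erase hr) a (hqsub hap) har).symm)
            (Finset.ne_of_mem_erase hr)
        · exact absurd ((huniq p₀ hp₀ p (Finset.mem_of_mem_erase hp) a (hqsub har) hap).symm)
            (Finset.ne_of_mem_erase hp)
        · exact huniq p (Finset.mem_of_mem_erase hp) r (Finset.mem_of_mem_erase hr) a hap har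
      · rw [hCdef, Finset.biUnion_insert, hbue]
        have hp₀s : p₀ ⊆ s := parts_subset hD hp₀
        ext a
        simp only [Finset.mem_union, Finset.mem_erase, Finset.mem_sdiff, id, hq]
        constructor
        · rintro (⟨hav, hap⟩ | ⟨has, hap⟩)
          · exact ⟨hav, hp₀s hap⟩
          · exact ⟨fun h => hap (h.symm ▸ hvp₀), has⟩
        · intro ha
          obtain ⟨hav, has⟩ := ha
          by_cases hap : a ∈ p₀
          · exact Or.inl ⟨hav, hap⟩
          · exact Or.inr ⟨has, hap⟩
      · intro p hp a ha b hb
        rcases Finset.mem_insert.1 hp with rfl | hp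
        · exact hindep p₀ hp₀ a (hqsub ha) b (hqsub hb)
        · exact hindep p (Finset.mem_of_mem_erase hp) a ha b hb
    refine ⟨C, hCmem, q, hqC, ?_, ?_⟩
    · intro u hu
      exact fun h => hindep p₀ hp₀ v hvp₀ u (hqsub hu) h
    · have h1 : insert v q = p₀ := Finset.insert_erase hvp₀
      have h2 : C.erase q = D.erase p₀ := by
        rw [hCdef, Finset.erase_insert (fun h => hqnotmem (Finset.mem_of_mem_erase h))]
      rw [h1, h2, Finset.insert_erase hp₀]

end Surgery2

section CardRec
variable {G : SimpleGraph V} {s : Finset V} {v : V} {k : ℕ}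

lemma vnot_of_parti_erase {C : Finset (Finset V)} (hC : C ∈ parti G (s.erase v) k)
    {p : Finset V} (hp : p ∈ C) : v ∉ p :=
  fun hvp => (Finset.notMem_erase v s) (parts_subset hC hp hvp)

open Classical in
lemma parti_card_succ (G : SimpleGraph V) (s : Finset V) (v : V) (hv : v ∈ s) (k : ℕ) :
    (parti G s (k+1)).card
      = (parti G (s.erase v) k).card
        + ∑ C ∈ parti G (s.erase v) (k+1),
            (C.filter (fun p => ∀ u ∈ p, ¬ G.Adj v u)).card := by
  classical
  set t := s.erase v with ht
  set A : Finset (Finset (Finset V)) := (parti G t k).image (fun C => insert {v} C) with hA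
  set B : Finset (Finset (Finset V)) :=
    (parti G t (k+1)).biUnion (fun C =>
      (C.filter (fun p => ∀ u ∈ p, ¬ G.Adj v u)).image
        (fun p => insert (insert v p) (C.erase p))) with hB
  have hBmem : ∀ D ∈ B, D ∈ parti G s (k+1) := by
    intro D hD
    rw [hB, Finset.mem_biUnion] at hD
    obtain ⟨C, hC, hD⟩ := hD
    rw [Finset.mem_image] at hD
    obtain ⟨p, hp, rfl⟩ := hD
    rw [Finset.mem_filter] at hp
    exact insert_part_mem hv hC hp.1 hp.2
  have hsplit : parti G s (k+1) = A ∪ B := by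
    apply Finset.Subset.antisymm
    · intro D hD
      rcases split_parti hv hD with ⟨C, hC, rfl⟩ | ⟨C, hC, p, hp, hall, rfl⟩
      · exact Finset.mem_union_left _ (Finset.mem_image.2 ⟨C, hC, rfl⟩)
      · refine Finset.mem_union_right _ ?_
        rw [hB, Finset.mem_biUnion]
        exact ⟨C, hC, Finset.mem_image.2 ⟨p, Finset.mem_filter.2 ⟨hp, hall⟩, rfl⟩⟩
    · intro D hD
      rcases Finset.mem_union.1 hD with hD | hD
      · rw [hA, Finset.mem_image] at hD
        obtain ⟨C, hC, rfl⟩ := hD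
        exact insert_singleton_mem hv hC
      · exact hBmem D hD
  have hdisj : Disjoint A B := by
    rw [Finset.disjoint_left]
    intro D hDA hDB
    rw [hA, Finset.mem_image] at hDA
    obtain ⟨C, hC, rfl⟩ := hDA
    rw [hB, Finset.mem_biUnion] at hDB
    obtain ⟨C', hC', hD⟩ := hDB
    rw [Finset.mem_image] at hD
    obtain ⟨p, hp, heq⟩ := hD
    rw [Finset.mem_filter] at hp
    have hvp : v ∉ p := vnot_of_parti_erase hC' hp.1
    have hpne : p.Nonempty := (mem_parti.1 hC').2.1 p hp.1
    -- {v} ∈ LHS but {v} ∉ RHS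
    have h1 : ({v} : Finset V) ∈ insert (insert v p) (C'.erase p) := by
      rw [heq]; exact Finset.mem_insert_self _ _
    rcases Finset.mem_insert.1 h1 with h | h
    · obtain ⟨a, ha⟩ := hpne
      have : a ∈ ({v} : Finset V) := h ▸ Finset.mem_insert_of_mem ha
      rw [Finset.mem_singleton] at this
      exact hvp (this ▸ ha)
    · exact vnot_of_parti_erase hC' (Finset.mem_of_mem_erase h) (Finset.mem_singleton_self v)
  rw [hsplit, Finset.card_union_of_disjoint hdisj]
  congr 1
  · rw [hA]
    apply Finset.card_image_of_injOn
    intro C₁ h₁ C₂ h₂ heq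
    have heq' : insert ({v} : Finset V) C₁ = insert {v} C₂ := heq
    have e1 : ({v} : Finset V) ∉ C₁ := fun h =>
      vnot_of_parti_erase h₁ h (Finset.mem_singleton_self v)
    have e2 : ({v} : Finset V) ∉ C₂ := fun h =>
      vnot_of_parti_erase h₂ h (Finset.mem_singleton_self v)
    rw [← Finset.erase_insert e1, ← Finset.erase_insert e2, heq']
  · rw [hB]
    rw [Finset.card_biUnion]
    · apply Finset.sum_congr rfl
      intro C hC
      apply Finset.card_image_of_injOn
      intro p₁ h₁ p₂ h₂ heq
      have heq' : insert (insert v p₁) (C.erase p₁) = insert (insert v p₂) (C.erase p₂) := heq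
      rw [Finset.mem_coe, Finset.mem_filter] at h₁ h₂
      -- recover p from D
      have hvp₁ : v ∉ p₁ := vnot_of_parti_erase hC h₁.1
      have hvp₂ : v ∉ p₂ := vnot_of_parti_erase hC h₂.1
      have hD : insert (insert v p₁) (C.erase p₁) ∈ parti G s (k+1) :=
        insert_part_mem hv hC h₁.1 h₁.2
      obtain ⟨-, -, huniq, -, -⟩ := mem_parti.1 hD
      have hm₁ : insert v p₁ ∈ insert (insert v p₁) (C.erase p₁) := Finset.mem_insert_self _ _
      have hm₂ : insert v p₂ ∈ insert (insert v p₁) (C.erase p₁) := by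
        rw [heq']; exact Finset.mem_insert_self _ _
      have : insert v p₁ = insert v p₂ :=
        huniq _ hm₁ _ hm₂ v (Finset.mem_insert_self _ _) (Finset.mem_insert_self _ _)
      rw [← Finset.erase_insert hvp₁, ← Finset.erase_insert hvp₂, this]
    · -- pairwise disjoint images
      intro C₁ h₁ C₂ h₂ hne
      rw [Function.onFun, Finset.disjoint_left]
      intro D hD₁ hD₂
      rw [Finset.mem_image] at hD₁ hD₂
      obtain ⟨p₁, hp₁, he₁⟩ := hD₁
      obtain ⟨p₂, hp₂, he₂⟩ := hD₂
      rw [Finset.mem_filter] at hp₁ hp₂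
      have hD : D ∈ parti G s (k+1) := he₁ ▸ insert_part_mem hv h₁ hp₁.1 hp₁.2
      obtain ⟨-, -, huniq, -, -⟩ := mem_parti.1 hD
      have hvp₁ : v ∉ p₁ := vnot_of_parti_erase h₁ hp₁.1
      have hvp₂ : v ∉ p₂ := vnot_of_parti_erase h₂ hp₂.1
      have hm₁ : insert v p₁ ∈ D := he₁ ▸ Finset.mem_insert_self _ _
      have hm₂ : insert v p₂ ∈ D := he₂ ▸ Finset.mem_insert_self _ _
      have hpp : insert v p₁ = insert v p₂ :=
        huniq _ hm₁ _ hm₂ v (Finset.mem_insert_self _ _) (Finset.mem_insert_self _ _)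
      have hp12 : p₁ = p₂ := by
        rw [← Finset.erase_insert hvp₁, ← Finset.erase_insert hvp₂, hpp]
      apply hne
      have hnm₁ : insert v p₁ ∉ C₁.erase p₁ := fun h =>
        vnot_of_parti_erase h₁ (Finset.mem_of_mem_erase h) (Finset.mem_insert_self v p₁)
      have hnm₂ : insert v p₂ ∉ C₂.erase p₂ := fun h =>
        vnot_of_parti_erase h₂ (Finset.mem_of_mem_erase h) (Finset.mem_insert_self v p₂)
      have he : C₁.erase p₁ = C₂.erase p₂ := by
        rw [← Finset.erase_insert hnm₁, ← Finset.erase_insert hnm₂, he₁, he₂, hpp]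
      rw [← Finset.insert_erase hp₁.1, ← Finset.insert_erase hp₂.1, he, hp12]

end CardRec

section Cors
variable {G : SimpleGraph V} {s : Finset V} {v : V} {k : ℕ}

open Classical in
lemma parti_card_succ_isolated (hv : v ∈ s) (hiso : ∀ u ∈ s, ¬ G.Adj v u) :
    (parti G s (k+1)).card
      = (parti G (s.erase v) k).card + (k+1) * (parti G (s.erase v) (k+1)).card := by
  rw [parti_card_succ G s v hv k]
  congr 1
  have : ∀ C ∈ parti G (s.erase v) (k+1),
      (C.filter (fun p => ∀ u ∈ p, ¬ G.Adj v u)).card = k+1 := by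
    intro C hC
    rw [Finset.filter_true_of_mem, (mem_parti.1 hC).1]
    intro p hp u hu
    exact hiso u (Finset.mem_of_mem_erase (parts_subset hC hp hu))
  rw [Finset.sum_congr rfl this, Finset.sum_const, smul_eq_mul, mul_comm]

open Classical in
lemma parti_card_succ_leaf (hv : v ∈ s) {u₀ : V} (hu₀ : u₀ ∈ s) (hadj : G.Adj v u₀)
    (huniq₀ : ∀ w ∈ s, G.Adj v w → w = u₀) :
    (parti G s (k+1)).card
      = (parti G (s.erase v) k).card + k * (parti G (s.erase v) (k+1)).card := by
  rw [parti_card_succ G s v hv k]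
  congr 1
  have hu₀t : u₀ ∈ s.erase v := Finset.mem_erase.2 ⟨fun h => G.irrefl (h ▸ hadj), hu₀⟩
  have key : ∀ C ∈ parti G (s.erase v) (k+1),
      (C.filter (fun p => ∀ u ∈ p, ¬ G.Adj v u)).card = k := by
    intro C hC
    obtain ⟨hcard, hne, huniq, hunion, hindep⟩ := mem_parti.1 hC
    obtain ⟨p₀, hp₀, hu₀p₀⟩ := exists_part hC hu₀t
    have hfe : C.filter (fun p => ∀ u ∈ p, ¬ G.Adj v u) = C.erase p₀ := by
      ext p
      rw [Finset.mem_filter, Finset.mem_erase]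
      constructor
      · rintro ⟨hp, hall⟩
        refine ⟨fun h => hall u₀ (h ▸ hu₀p₀) hadj, hp⟩
      · rintro ⟨hpne, hp⟩
        refine ⟨hp, fun u hu hadju => ?_⟩
        have hus : u = u₀ := huniq₀ u (Finset.mem_of_mem_erase (parts_subset hC hp hu)) hadju
        exact hpne (huniq p hp p₀ hp₀ u hu (hus ▸ hu₀p₀))
    rw [hfe, Finset.card_erase_of_mem hp₀, hcard]
    omega
  rw [Finset.sum_congr rfl key, Finset.sum_const, smul_eq_mul, mul_comm]

lemma parti_card_no_edges :
    ∀ (n : ℕ) (s : Finset V), s.card = n → (∀ a ∈ s, ∀ b ∈ s, ¬ G.Adj a b) →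
      ∀ k, (parti G s k).card = stirling2 n k := by
  intro n
  induction n with
  | zero =>
    intro s hcard _ k
    rw [Finset.card_eq_zero] at hcard
    subst hcard
    rw [parti_empty]
    rcases k with _ | k <;> simp [stirling2]
  | succ n ih =>
    intro s hcard hnoe k
    have hs : s.Nonempty := Finset.card_pos.1 (by omega)
    obtain ⟨v, hv⟩ := hs
    rcases k with _ | k
    · rw [parti_zero_of_nonempty ⟨v, hv⟩]
      rfl
    · rw [parti_card_succ_isolated hv (fun u hu => hnoe v hv u hu)]
      have hecard : (s.erase v).card = n := by
        rw [Finset.card_erase_of_mem hv, hcard]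
        omega
      have hnoe' : ∀ a ∈ s.erase v, ∀ b ∈ s.erase v, ¬ G.Adj a b := fun a ha b hb =>
        hnoe a (Finset.mem_of_mem_erase ha) b (Finset.mem_of_mem_erase hb)
      rw [ih _ hecard hnoe' k, ih _ hecard hnoe' (k+1)]
      show _ = (k + 1) * stirling2 n (k + 1) + stirling2 n k
      omega

end Cors

end PartiSection

section GraphLemmas
variable {W : Type} [Fintype W] [DecidableEq W]

/-- In a finite acyclic graph with an edge, some vertex has a unique neighbor. -/
lemma exists_leaf_aux (H : SimpleGraph W) (hac : H.IsAcyclic)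
    {a b : W} (hab : H.Adj a b) :
    ∃ v u, H.Adj v u ∧ ∀ x, H.Adj v x → x = u := by
  classical
  set P : ℕ → Prop := fun n => ∃ (x y : W) (p : H.Walk x y), p.IsPath ∧ p.length = n with hP
  have hP1 : P 1 := ⟨a, b, (SimpleGraph.Path.singleton hab : H.Path a b).1,
    (SimpleGraph.Path.singleton hab).2, rfl⟩
  have hb : 1 ≤ Fintype.card W := by
    have : Nonempty W := ⟨a⟩
    exact Fintype.card_pos
  obtain ⟨x, y, p, hp, hlen⟩ := Nat.findGreatest_spec hb hP1
  set N := Nat.findGreatest P (Fintype.card W) with hN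
  have hN1 : 1 ≤ N := Nat.le_findGreatest hb hP1
  have hnil : ¬ p.Nil := by
    rw [SimpleGraph.Walk.nil_iff_length_eq]
    omega
  obtain ⟨u, hxu, q, rfl⟩ := SimpleGraph.Walk.not_nil_iff.mp hnil
  -- p = cons hxu q ; claim x's unique neighbor is u
  refine ⟨x, u, hxu, fun z hz => ?_⟩
  by_contra hzu
  have hq : q.IsPath := hp.of_cons
  have hxq : x ∉ q.support := ((SimpleGraph.Walk.cons_isPath_iff hxu q).mp hp).2
  by_cases hzs : z ∈ (SimpleGraph.Walk.cons hxu q).support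
  · -- z on the path: build a cycle
    have hzx : z ≠ x := fun h => H.irrefl (h ▸ hz)
    have hzq : z ∈ q.support := by
      rw [SimpleGraph.Walk.support_cons] at hzs
      rcases List.mem_cons.mp hzs with h | h
      · exact absurd h hzx
      · exact h
    have hzu' : z ∈ q.support := hzq
    set w0 : H.Walk x z := SimpleGraph.Walk.cons hxu (q.takeUntil z hzq) with hw0
    have hw0path : w0.IsPath := by
      rw [hw0, SimpleGraph.Walk.cons_isPath_iff]
      exact ⟨hq.takeUntil hzq, fun h => hxq (SimpleGraph.Walk.support_takeUntil_subset q hzq h)⟩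
    have hcyc : (SimpleGraph.Walk.cons hz.symm w0).IsCycle := by
      rw [SimpleGraph.Walk.cons_isCycle_iff]
      refine ⟨hw0path, ?_⟩
      intro he
      rw [hw0] at he
      simp only [SimpleGraph.Walk.edges_cons, List.mem_cons] at he
      rcases he with he | he
      · rw [Sym2.eq_iff] at he
        rcases he with ⟨h1, h2⟩ | ⟨h1, h2⟩
        · exact hzx h1
        · exact hzu h1
      · have : x ∈ (q.takeUntil z hzq).support :=
          SimpleGraph.Walk.snd_mem_support_of_mem_edges _ he
        exact hxq (SimpleGraph.Walk.support_takeUntil_subset q hzq this)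
    exact hac _ hcyc
  · -- extend the path, contradiction with maximality
    have hlong : ((SimpleGraph.Walk.cons hz.symm (SimpleGraph.Walk.cons hxu q))).IsPath := by
      rw [SimpleGraph.Walk.cons_isPath_iff]
      exact ⟨hp, hzs⟩
    have hlen' : q.length + 1 = N := by
      rw [← hlen, SimpleGraph.Walk.length_cons]
    have hlt : N + 1 ≤ Fintype.card W := by
      have h2 := hlong.length_lt
      simp only [SimpleGraph.Walk.length_cons] at h2
      omega
    have := Nat.findGreatest_is_greatest (show N < N + 1 by omega) hlt
    refine this ⟨z, y, _, hlong, ?_⟩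
    simp only [SimpleGraph.Walk.length_cons]
    omega

end GraphLemmas

section CC
variable {V : Type} [DecidableEq V] {G : SimpleGraph V}

omit [DecidableEq V] in
lemma induce_acyclic (hG : G.IsAcyclic) (s : Set V) : (G.induce s).IsAcyclic := by
  intro v c hc
  have hinj : Function.Injective ⇑(SimpleGraph.Embedding.induce (G := G) s).toHom :=
    fun a b h => (SimpleGraph.Embedding.induce (G := G) s).injective h
  exact hG _ ((SimpleGraph.Walk.map_isCycle_iff_of_injective hinj).mpr hc)

lemma reachable_avoid {s t : Set V} (hts : t ⊆ s) :
    ∀ {a b : ↥s} (w : (G.induce s).Walk a b), (∀ z ∈ w.support, (z : V) ∈ t) →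
      ∀ (ha : (a : V) ∈ t) (hb : (b : V) ∈ t),
        (G.induce t).Reachable ⟨a, ha⟩ ⟨b, hb⟩ := by
  intro a b w
  induction w with
  | nil => intro _ ha hb; exact SimpleGraph.Reachable.refl _
  | @cons x y z h p ih =>
    intro hw ha hb
    have hy : (y : V) ∈ t := hw y (by simp)
    have step : (G.induce t).Adj ⟨x, ha⟩ ⟨y, hy⟩ := by
      simp only [SimpleGraph.comap_adj, Function.Embedding.coe_subtype]
      exact h
    exact step.reachable.trans (ih (fun z hz => hw z (by simp [hz])) hy hb)

lemma path_avoids {U : Type} [DecidableEq U] {H : SimpleGraph U} {x y v : U}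
    (p : H.Walk x y) (hp : p.IsPath) (hvx : v ≠ x) (hvy : v ≠ y)
    {u₀ : U} (hu : ∀ z, H.Adj v z → z = u₀) : v ∉ p.support := by
  intro hv
  have hq1 : (p.takeUntil v hv).IsPath := hp.takeUntil hv
  have hq2 : (p.dropUntil v hv).IsPath := hp.dropUntil hv
  have hn1 : ¬ (p.takeUntil v hv).reverse.Nil := SimpleGraph.Walk.not_nil_of_ne hvx
  have hn2 : ¬ (p.dropUntil v hv).Nil := SimpleGraph.Walk.not_nil_of_ne hvy
  obtain ⟨a, hva, r', hr'⟩ := SimpleGraph.Walk.not_nil_iff.mp hn1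
  obtain ⟨b, hvb, q2', hq2'⟩ := SimpleGraph.Walk.not_nil_iff.mp hn2
  have ha1 : a ∈ (p.takeUntil v hv).support := by
    rw [← List.mem_reverse, ← SimpleGraph.Walk.support_reverse, hr',
      SimpleGraph.Walk.support_cons]
    exact List.mem_cons_of_mem _ r'.start_mem_support
  have hb2 : b ∈ (p.dropUntil v hv).support.tail := by
    rw [hq2', SimpleGraph.Walk.support_cons]
    exact q2'.start_mem_support
  have hsupp : p.support = (p.takeUntil v hv).support ++ (p.dropUntil v hv).support.tail := by
    rw [← SimpleGraph.Walk.support_append, SimpleGraph.Walk.take_spec]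
  have hnd := hp.support_nodup
  rw [hsupp, List.nodup_append] at hnd
  have hab : a ≠ b := fun h => hnd.2.2 a ha1 b hb2 h
  exact hab ((hu a hva).trans (hu b hvb).symm)

lemma cc_card_no_adj {W : Type} [Finite W] {H : SimpleGraph W} (h : ∀ a b, ¬H.Adj a b) :
    Nat.card H.ConnectedComponent = Nat.card W := by
  symm
  apply Nat.card_eq_of_bijective H.connectedComponentMk
  constructor
  · intro a b hab
    obtain ⟨w⟩ := (SimpleGraph.ConnectedComponent.eq.mp hab)
    cases w with
    | nil => rfl
    | cons hadj _ => exact absurd hadj (h _ _)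
  · intro C
    exact C.exists_rep

lemma cc_card_le {W : Type} [Finite W] (H : SimpleGraph W) :
    Nat.card H.ConnectedComponent ≤ Nat.card W :=
  Nat.card_le_card_of_surjective H.connectedComponentMk (fun C => C.exists_rep)

lemma cc_card_erase_leaf [Fintype V] {s : Finset V} {v u : V} (hv : v ∈ s) (hu : u ∈ s)
    (hadj : G.Adj v u) (huniq : ∀ w ∈ s, G.Adj v w → w = u) :
    Nat.card (G.induce (↑(s.erase v) : Set V)).ConnectedComponent
      = Nat.card (G.induce (↑s : Set V)).ConnectedComponent := by
  have hts : (↑(s.erase v) : Set V) ⊆ (↑s : Set V) := by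
    intro x hx
    simp only [Finset.coe_erase, Set.mem_diff] at hx
    exact hx.1
  have huv : u ≠ v := fun h => G.irrefl (h ▸ hadj)
  apply Nat.card_eq_of_bijective
    (SimpleGraph.ConnectedComponent.map (G.induceHomOfLE hts).toHom)
  constructor
  · -- injective
    refine SimpleGraph.ConnectedComponent.ind₂ ?_
    intro x y hmap
    simp only [SimpleGraph.ConnectedComponent.map_mk] at hmap
    obtain ⟨w⟩ := SimpleGraph.ConnectedComponent.eq.mp hmap
    set pw : (G.induce (↑s : Set V)).Walk ((G.induceHomOfLE hts).toHom x)
        ((G.induceHomOfLE hts).toHom y) := (w.toPath : (G.induce (↑s : Set V)).Path _ _).1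
      with hpw
    have hp : pw.IsPath := (w.toPath : (G.induce (↑s : Set V)).Path _ _).2
    have havoid : ∀ z ∈ pw.support, (z : V) ∈ (↑(s.erase v) : Set V) := by
      intro z hz
      have hzs : (z : V) ∈ s := z.2
      have hzv : (z : V) ≠ v := by
        intro hzveq
        have hvs : v ∈ (↑s : Set V) := by exact_mod_cast hv
        have hx' : (⟨v, hvs⟩ : ↥(↑s : Set V)) ∉ pw.support :=
          path_avoids pw hp
            (fun h => by
              have h2 := congrArg Subtype.val h
              have hxv : (x : V) ∈ s.erase v := by exact_mod_cast x.2
              exact (Finset.mem_erase.1 hxv).1 h2.symm)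
            (fun h => by
              have h2 := congrArg Subtype.val h
              have hyv : (y : V) ∈ s.erase v := by exact_mod_cast y.2
              exact (Finset.mem_erase.1 hyv).1 h2.symm)
            (u₀ := ⟨u, by exact_mod_cast hu⟩)
            (fun z' hz' => Subtype.ext (huniq (z' : V) (by exact_mod_cast z'.2) hz'))
        apply hx'
        have hzz : z = (⟨v, hvs⟩ : ↥(↑s : Set V)) := Subtype.ext hzveq
        rwa [← hzz]
      simp only [Finset.coe_erase, Set.mem_diff, Set.mem_singleton_iff]
      exact ⟨hzs, hzv⟩
    have hreach := reachable_avoid hts pw havoid x.2 y.2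
    rw [SimpleGraph.ConnectedComponent.eq]
    convert hreach using 2 <;> exact Subtype.ext rfl
  · -- surjective
    refine SimpleGraph.ConnectedComponent.ind ?_
    intro x
    by_cases hxv : (x : V) = v
    · have hmem : u ∈ (↑(s.erase v) : Set V) := by
        simp [Finset.mem_erase, huv, hu]
      refine ⟨(G.induce (↑(s.erase v) : Set V)).connectedComponentMk ⟨u, hmem⟩, ?_⟩
      rw [SimpleGraph.ConnectedComponent.map_mk, SimpleGraph.ConnectedComponent.eq]
      have hAdj : (G.induce (↑s : Set V)).Adj ((G.induceHomOfLE hts).toHom ⟨u, hmem⟩) x := by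
        have : G.Adj u (x : V) := by rw [hxv]; exact hadj.symm
        exact this
      exact hAdj.reachable
    · have hmem : (x : V) ∈ (↑(s.erase v) : Set V) := by
        simp only [Finset.coe_erase, Set.mem_diff, Set.mem_singleton_iff]
        exact ⟨x.2, hxv⟩
      refine ⟨(G.induce (↑(s.erase v) : Set V)).connectedComponentMk ⟨(x : V), hmem⟩, ?_⟩
      rw [SimpleGraph.ConnectedComponent.map_mk]
      have : ((G.induceHomOfLE hts).toHom ⟨(x : V), hmem⟩) = x := Subtype.ext rfl
      rw [this]

end CC


section Bridge
variable {V : Type} [DecidableEq V]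

lemma graphStirling_eq_parti [Fintype V] (G : SimpleGraph V) (k : ℕ) :
    graphStirling G k = (parti G Finset.univ k).card := by
  classical
  have e : {P : Finpartition (Finset.univ : Finset V) //
      P.parts.card = k ∧ ∀ p ∈ P.parts, ∀ u ∈ p, ∀ v ∈ p, ¬ G.Adj u v}
      ≃ {C : Finset (Finset V) // C ∈ parti G Finset.univ k} := by
    refine ⟨fun P => ⟨P.1.parts, ?_⟩, fun C => ⟨⟨C.1, ?_, ?_, ?_⟩, ?_, ?_⟩, ?_, ?_⟩
    · rw [mem_parti]
      exact ⟨P.2.1, fun p hp => P.1.nonempty_of_mem_parts hp,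
        fun p hp q hq a hap haq => P.1.eq_of_mem_parts hp hq hap haq,
        P.1.biUnion_parts, P.2.2⟩
    · -- supIndep
      rw [Finset.supIndep_iff_pairwiseDisjoint]
      intro p hp q hq hne
      rw [Function.onFun, Finset.disjoint_left]
      intro a hap haq
      exact hne ((mem_parti.1 C.2).2.2.1 p hp q hq a hap haq)
    · rw [Finset.sup_eq_biUnion]
      exact (mem_parti.1 C.2).2.2.2.1
    · intro hbot
      obtain ⟨a, ha⟩ := (mem_parti.1 C.2).2.1 _ hbot
      simp at ha
    · exact (mem_parti.1 C.2).1
    · exact (mem_parti.1 C.2).2.2.2.2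
    · intro P
      apply Subtype.ext
      apply Finpartition.ext
      rfl
    · intro C
      apply Subtype.ext
      rfl
  rw [graphStirling, Nat.card_congr e, Nat.card_eq_fintype_card, Fintype.card_coe]

end Bridge

section Main
variable {V : Type} [Fintype V] [DecidableEq V]

lemma forest_main (G : SimpleGraph V) (hG : G.IsAcyclic) :
    ∀ (n : ℕ) (s : Finset V), s.card = n → ∀ (c k : ℕ), 1 ≤ c → 1 ≤ k →
      Nat.card (G.induce (↑s : Set V)).ConnectedComponent = c →
      (parti G s k).card
        = ∑ i ∈ Finset.range c, Nat.choose (c - 1) i * stirling2 (s.card - 1 - i) (k - 1) := by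
  intro n
  induction n using Nat.strong_induction_on with
  | _ n ih =>
    intro s hn c k hc1 hk1 hcc
    by_cases hedge : ∀ a ∈ s, ∀ b ∈ s, ¬ G.Adj a b
    · -- edgeless case
      have hnoadj : ∀ a b : ↥(↑s : Set V), ¬ (G.induce (↑s : Set V)).Adj a b := by
        intro a b hab
        exact hedge a.1 (by exact_mod_cast a.2) b.1 (by exact_mod_cast b.2) hab
      have hcs : c = s.card := by
        rw [← hcc, cc_card_no_adj hnoadj, Nat.card_coe_set_eq, Set.ncard_coe_finset]
      subst hcs
      rw [parti_card_no_edges s.card s rfl hedge k]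
      have hs1 : 1 ≤ s.card := hc1
      obtain ⟨m, hm⟩ : ∃ m, s.card = m + 1 := ⟨s.card - 1, by omega⟩
      obtain ⟨j, hj⟩ : ∃ j, k = j + 1 := ⟨k - 1, by omega⟩
      rw [hm, hj]
      simp only [Nat.add_sub_cancel]
      exact stirling2_eq_sum m j
    · -- there is an edge; find a leaf
      push_neg at hedge
      obtain ⟨a, ha, b, hb, hab⟩ := hedge
      have hac : (G.induce (↑s : Set V)).IsAcyclic := induce_acyclic hG _
      have hadj' : (G.induce (↑s : Set V)).Adj ⟨a, by exact_mod_cast ha⟩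
          ⟨b, by exact_mod_cast hb⟩ := hab
      obtain ⟨v', u', hvu, huniq⟩ := exists_leaf_aux _ hac hadj'
      have hvs : (v' : V) ∈ s := by exact_mod_cast v'.2
      have hus : (u' : V) ∈ s := by exact_mod_cast u'.2
      have hadjuv : G.Adj (v' : V) (u' : V) := hvu
      have huniqG : ∀ w ∈ s, G.Adj (v' : V) w → w = (u' : V) := by
        intro w hw hadjw
        have hadj2 : (G.induce (↑s : Set V)).Adj v' ⟨w, by exact_mod_cast hw⟩ := hadjw
        exact congrArg Subtype.val (huniq _ hadj2)
      have hccer : Nat.card (G.induce (↑(s.erase (v' : V)) : Set V)).ConnectedComponent = c := by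
        rw [cc_card_erase_leaf hvs hus hadjuv huniqG, hcc]
      have hcle : c ≤ s.card - 1 := by
        rw [← hccer]
        have hle := cc_card_le (G.induce (↑(s.erase (v' : V)) : Set V))
        rw [Nat.card_coe_set_eq, Set.ncard_coe_finset, Finset.card_erase_of_mem hvs] at hle
        exact hle
      have hscard2 : 2 ≤ s.card := by omega
      have hercard : (s.erase (v' : V)).card = n - 1 := by
        rw [Finset.card_erase_of_mem hvs, hn]
      have huv : (u' : V) ≠ (v' : V) := fun h => G.irrefl (h ▸ hadjuv)
      obtain ⟨j, hj⟩ : ∃ j, k = j + 1 := ⟨k - 1, by omega⟩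
      subst hj
      rw [parti_card_succ_leaf hvs hus hadjuv huniqG]
      rcases Nat.eq_zero_or_pos j with rfl | hj1
      · -- k = 1
        have h0 : (parti G (s.erase (v' : V)) 0).card = 0 := by
          rw [parti_zero_of_nonempty ⟨(u' : V), Finset.mem_erase.2 ⟨huv, hus⟩⟩,
            Finset.card_empty]
        rw [h0]
        simp only [zero_mul, add_zero, Nat.add_sub_cancel, zero_add, Nat.mul_zero]
        symm
        apply Finset.sum_eq_zero
        intro i hi
        rw [Finset.mem_range] at hi
        obtain ⟨m, hm⟩ : ∃ m, s.card - 1 - i = m + 1 := ⟨s.card - 2 - i, by omega⟩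
        rw [hm, stirling2_succ_zero, mul_zero]
      · -- k ≥ 2
        have ih1 := ih (n-1) (by omega) (s.erase (v' : V)) hercard c j hc1 hj1 hccer
        have ih2 := ih (n-1) (by omega) (s.erase (v' : V)) hercard c (j+1) hc1 (by omega) hccer
        rw [hercard] at ih1 ih2  -- no-op; card already there
        rw [ih1, ih2, hn]
        rw [Finset.mul_sum, ← Finset.sum_add_distrib]
        apply Finset.sum_congr rfl
        intro i hi
        rw [Finset.mem_range] at hi
        have hcn : c ≤ n - 1 := by rw [← hn]; exact hcle
        obtain ⟨m, hm⟩ : ∃ m, n - 1 - i = m + 1 := ⟨n - 2 - i, by omega⟩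
        have hm2 : n - 1 - 1 - i = m := by omega
        rw [hm, hm2]
        obtain ⟨j2, hj2⟩ : ∃ j2, j = j2 + 1 := ⟨j - 1, by omega⟩
        subst hj2
        simp only [Nat.add_sub_cancel]
        rw [stirling2_succ_succ]
        ring

end Main

theorem forest_graphStirling_eq {V : Type} [Fintype V] [DecidableEq V]
    (G : SimpleGraph V) (hG : G.IsAcyclic) (n c : ℕ)
    (hn : Fintype.card V = n) (hc : Nat.card G.ConnectedComponent = c)
    (hc1 : 1 ≤ c) (hcn : c ≤ n) (k : ℕ) (hk : 1 ≤ k) :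
    graphStirling G k =
      ∑ i ∈ Finset.range c, Nat.choose (c - 1) i * stirling2 (n - 1 - i) (k - 1) := by
  classical
  have h1 : graphStirling G k = (parti G Finset.univ k).card := graphStirling_eq_parti G k
  have h2 : Nat.card (G.induce (↑(Finset.univ : Finset V) : Set V)).ConnectedComponent = c := by
    rw [← hc]
    apply Nat.card_congr
    have huniv : (↑(Finset.univ : Finset V) : Set V) = Set.univ := by simp
    rw [huniv]
    exact (SimpleGraph.induceUnivIso G).connectedComponentEquiv
  have h3 := forest_main G hG (Fintype.card V) Finset.univ (by simp) c k hc1 hk h2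
  rw [h1, h3, Finset.card_univ, hn]
end

section
/- For a tree T on n ≥ 1 vertices, the number of partitions of the vertex set of T into k non-empty independent sets equals S(n-1, k-1), the ordinary Stirling number of the second kind. -/
open Finset SimpleGraph Polynomial

/-! ### Stirling number identities -/

lemma stirling2_eq_zero : ∀ {n k : ℕ}, n < k → stirling2 n k = 0
  | 0, _ + 1, _ => rfl
  | n + 1, k + 1, h => by
    have h1 : n < k + 1 := by omega
    have h2 : n < k := by omega
    simp [stirling2, stirling2_eq_zero h1, stirling2_eq_zero h2]

lemma mul_descFactorial (x k : ℕ) :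
    x * x.descFactorial k = x.descFactorial (k + 1) + k * x.descFactorial k := by
  rcases lt_or_ge x k with h | h
  · simp [Nat.descFactorial_eq_zero_iff_lt.2 h,
      Nat.descFactorial_eq_zero_iff_lt.2 (by omega : x < k + 1)]
  · rw [Nat.descFactorial_succ]
    have : x - k + k = x := by omega
    nlinarith [Nat.sub_add_cancel h]

lemma sum_stirling2_descFactorial (m x : ℕ) :
    x ^ m = ∑ k ∈ Finset.range (m + 1), stirling2 m k * x.descFactorial k := by
  induction m with
  | zero => simp [stirling2]
  | succ m ih =>
    rw [pow_succ, ih, Finset.sum_mul]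
    have key : ∀ k, (stirling2 m k * x.descFactorial k) * x
        = stirling2 m k * x.descFactorial (k+1) + k * stirling2 m k * x.descFactorial k := by
      intro k
      rw [mul_comm _ x, ← mul_assoc x, mul_comm x (stirling2 m k), mul_assoc, mul_descFactorial]
      ring
    rw [Finset.sum_congr rfl (fun k _ => key k), Finset.sum_add_distrib]
    rw [Finset.sum_range_succ' (fun k => stirling2 (m+1) k * x.descFactorial k)]
    rw [show stirling2 (m+1) 0 * x.descFactorial 0 = 0 from by simp [stirling2]]
    rw [add_zero]
    have h2 : ∑ k ∈ Finset.range (m+1), k * stirling2 m k * x.descFactorial k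
        = ∑ k ∈ Finset.range (m+1), (k+1) * stirling2 m (k+1) * x.descFactorial (k+1) := by
      rw [Finset.sum_range_succ' (fun k => k * stirling2 m k * x.descFactorial k)]
      rw [Finset.sum_range_succ (fun k => (k+1) * stirling2 m (k+1) * x.descFactorial (k+1))]
      simp [stirling2_eq_zero (Nat.lt_succ_self m)]
    rw [h2, ← Finset.sum_add_distrib]
    apply Finset.sum_congr rfl
    intro k _
    simp [stirling2]
    ring

/-! ### Extracting coefficients from falling-factorial expansions -/

lemma extract_coeff {N : ℕ} {a b : ℕ → ℕ}
    (h : ∀ x : ℕ, ∑ k ∈ Finset.range N, a k * x.descFactorial k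
      = ∑ k ∈ Finset.range N, b k * x.descFactorial k) :
    ∀ m, m < N → a m = b m := by
  intro m
  induction m using Nat.strong_induction_on with
  | _ m ih =>
    intro hm
    have trunc : ∀ c : ℕ → ℕ, ∑ k ∈ Finset.range N, c k * (m:ℕ).descFactorial k
        = ∑ k ∈ Finset.range (m+1), c k * (m:ℕ).descFactorial k := by
      intro c
      rw [← Finset.sum_range_add_sum_Ico _ (by omega : m + 1 ≤ N)]
      have : ∑ k ∈ Finset.Ico (m+1) N, c k * (m:ℕ).descFactorial k = 0 := by
        apply Finset.sum_eq_zero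
        intro k hk
        rw [Finset.mem_Ico] at hk
        rw [Nat.descFactorial_eq_zero_iff_lt.2 (by omega), mul_zero]
      omega
    have h' := h m
    rw [trunc a, trunc b, Finset.sum_range_succ, Finset.sum_range_succ] at h'
    have hlow : ∑ k ∈ Finset.range m, a k * (m:ℕ).descFactorial k
        = ∑ k ∈ Finset.range m, b k * (m:ℕ).descFactorial k := by
      apply Finset.sum_congr rfl
      intro k hk
      rw [Finset.mem_range] at hk
      rw [ih k hk (by omega)]
    rw [hlow] at h'
    have hfac : 0 < (m:ℕ).descFactorial m := by
      rw [Nat.descFactorial_self]; exact Nat.factorial_pos m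
    exact Nat.eq_of_mul_eq_mul_right hfac (Nat.add_left_cancel h')



noncomputable instance finpartitionFintype {α : Type} [DecidableEq α] [Fintype α] (s : Finset α) :
    Fintype (Finpartition s) :=
  Fintype.ofInjective Finpartition.parts (fun _ _ h => Finpartition.ext h)

section PartitionCount
variable {V : Type} [Fintype V] [DecidableEq V]

instance kerDec {x : ℕ} (f : V → Fin x) : DecidableRel ⇑(Setoid.ker f) :=
  fun a b => decidable_of_iff (f a = f b) Iff.rfl

noncomputable def fiberPartition {x : ℕ} (f : V → Fin x) : Finpartition (univ : Finset V) :=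
  Finpartition.ofSetoid (Setoid.ker f)

lemma mem_part_fiberPartition {x : ℕ} (f : V → Fin x) (a b : V) :
    b ∈ (fiberPartition f).part a ↔ f a = f b :=
  Finpartition.mem_part_ofSetoid_iff_rel

lemma Finpartition.parts_eq_image {α : Type} [DecidableEq α] {s : Finset α} (P : Finpartition s) :
    P.parts = s.image P.part := by
  ext p
  constructor
  · intro hp
    obtain ⟨a, ha, hpa⟩ := P.part_surjOn hp
    exact Finset.mem_image.2 ⟨a, ha, hpa⟩
  · rw [Finset.mem_image]
    rintro ⟨a, ha, rfl⟩
    exact (P.part_mem).2 ha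

lemma finpartition_eq_of_part_eq {α : Type} [DecidableEq α] {s : Finset α}
    {P Q : Finpartition s} (h : ∀ a ∈ s, P.part a = Q.part a) : P = Q := by
  apply Finpartition.ext
  rw [P.parts_eq_image, Q.parts_eq_image]
  exact Finset.image_congr h

lemma key_fiber {x : ℕ} {f : V → Fin x} {P : Finpartition (univ : Finset V)}
    (hf : fiberPartition f = P) {p : Finset V} (hp : p ∈ P.parts) {a : V} (ha : a ∈ p) :
    ∀ b, b ∈ p ↔ f a = f b := by
  subst hf
  rw [← Finpartition.part_eq_of_mem _ hp ha]
  exact fun b => mem_part_fiberPartition f a b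

/-- functions with fiber partition `P` biject with embeddings of the parts into colors -/
noncomputable def fiberEquiv (x : ℕ) (P : Finpartition (univ : Finset V)) :
    {f : V → Fin x // fiberPartition f = P} ≃ ({p // p ∈ P.parts} ↪ Fin x) where
  toFun f :=
    ⟨fun p => f.1 (P.nonempty_of_mem_parts p.2).choose, by
      rintro ⟨p, hp⟩ ⟨q, hq⟩ h
      simp only at h
      have hcp := (P.nonempty_of_mem_parts hp).choose_spec
      have hcq := (P.nonempty_of_mem_parts hq).choose_spec
      have : (P.nonempty_of_mem_parts hq).choose ∈ p :=
        (key_fiber f.2 hp hcp _).2 h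
      exact Subtype.ext (P.eq_of_mem_parts hp hq this hcq)⟩
  invFun g :=
    ⟨fun v => g.1 ⟨P.part v, (P.part_mem).2 (mem_univ v)⟩, by
      apply finpartition_eq_of_part_eq
      intro a _
      ext b
      rw [mem_part_fiberPartition]
      have hiff : b ∈ P.part a ↔ P.part b = P.part a :=
        P.mem_part_iff_part_eq_part (mem_univ b) (mem_univ a)
      constructor
      · intro h
        have h2 : P.part a = P.part b := Subtype.ext_iff.1 (g.2 h)
        exact hiff.2 h2.symm
      · intro hb
        have h2 := hiff.1 hb
        simp only [h2]⟩
  left_inv := by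
    rintro ⟨f, hf⟩
    apply Subtype.ext
    funext v
    simp only
    have hp := (P.part_mem).2 (mem_univ v)
    have hc := (P.nonempty_of_mem_parts hp).choose_spec
    exact (key_fiber hf hp hc v).1 (P.mem_part (mem_univ v))
  right_inv := by
    rintro ⟨g, hg⟩
    apply Function.Embedding.ext
    intro p
    have h : P.part (P.nonempty_of_mem_parts p.2).choose = p.1 :=
      P.part_eq_of_mem p.2 (P.nonempty_of_mem_parts p.2).choose_spec
    exact congrArg g (Subtype.ext h)

lemma card_fiber_eq (x : ℕ) (P : Finpartition (univ : Finset V)) :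
    Nat.card {f : V → Fin x // fiberPartition f = P} = x.descFactorial P.parts.card := by
  rw [Nat.card_congr (fiberEquiv x P), Nat.card_eq_fintype_card, Fintype.card_embedding_eq]
  simp

lemma indep_fiberPartition {G : SimpleGraph V} {x : ℕ} {f : V → Fin x}
    (hf : ∀ u v, G.Adj u v → f u ≠ f v) :
    ∀ p ∈ (fiberPartition f).parts, ∀ u ∈ p, ∀ v ∈ p, ¬ G.Adj u v := by
  intro p hp u hu v hv hadj
  rw [(fiberPartition f).parts_eq_image] at hp
  obtain ⟨a, _, rfl⟩ := Finset.mem_image.1 hp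
  rw [mem_part_fiberPartition] at hu hv
  exact hf u v hadj (hu.symm.trans hv)

lemma proper_of_fiber_indep {G : SimpleGraph V} {x : ℕ} {f : V → Fin x}
    {P : Finpartition (univ : Finset V)} (hfP : fiberPartition f = P)
    (hP : ∀ p ∈ P.parts, ∀ u ∈ p, ∀ v ∈ p, ¬ G.Adj u v) :
    ∀ u v, G.Adj u v → f u ≠ f v := by
  intro u v hadj hfe
  subst hfP
  exact hP _ (((fiberPartition f).part_mem).2 (mem_univ u)) u
    ((fiberPartition f).mem_part (mem_univ u)) v
    ((mem_part_fiberPartition f u v).2 hfe) hadj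

lemma chromaticCount_eq_sum (G : SimpleGraph V) (x : ℕ) :
    chromaticCount G x
      = ∑ k ∈ Finset.range (Fintype.card V + 1), graphStirling G k * x.descFactorial k := by
  classical
  have hGS : ∀ k, graphStirling G k
      = (univ.filter (fun P : Finpartition (univ : Finset V) =>
          (∀ p ∈ P.parts, ∀ u ∈ p, ∀ v ∈ p, ¬ G.Adj u v) ∧ P.parts.card = k)).card := by
    intro k
    rw [graphStirling, Nat.card_eq_fintype_card, Fintype.card_subtype]
    congr 1
    apply Finset.filter_congr
    intro P _
    exact and_comm
  rw [chromaticCount, Nat.card_eq_fintype_card, Fintype.card_subtype]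
  set A := univ.filter (fun P : Finpartition (univ : Finset V) =>
    ∀ p ∈ P.parts, ∀ u ∈ p, ∀ v ∈ p, ¬ G.Adj u v) with hA
  have hmaps : ∀ f ∈ univ.filter (fun f : V → Fin x => ∀ u v, G.Adj u v → f u ≠ f v),
      fiberPartition f ∈ A := by
    intro f hf
    rw [Finset.mem_filter] at hf
    exact Finset.mem_filter.2 ⟨mem_univ _, indep_fiberPartition hf.2⟩
  rw [Finset.card_eq_sum_card_fiberwise hmaps]
  have hper : ∀ P ∈ A,
      ((univ.filter (fun f : V → Fin x => ∀ u v, G.Adj u v → f u ≠ f v)).filter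
        (fun f => fiberPartition f = P)).card = x.descFactorial P.parts.card := by
    intro P hP
    rw [Finset.mem_filter] at hP
    have heq : ((univ.filter (fun f : V → Fin x => ∀ u v, G.Adj u v → f u ≠ f v)).filter
        (fun f => fiberPartition f = P)) = univ.filter (fun f => fiberPartition f = P) := by
      ext f
      simp only [Finset.mem_filter, mem_univ, true_and]
      exact ⟨fun h => h.2, fun h => ⟨proper_of_fiber_indep h hP.2, h⟩⟩
    rw [heq, ← Fintype.card_subtype, ← Nat.card_eq_fintype_card, card_fiber_eq]
  rw [Finset.sum_congr rfl hper]
  have hmaps2 : ∀ P ∈ A, P.parts.card ∈ Finset.range (Fintype.card V + 1) := by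
    intro P _
    rw [Finset.mem_range]
    have := P.card_parts_le_card
    simp only [Finset.card_univ] at this
    omega
  rw [← Finset.sum_fiberwise_of_maps_to hmaps2 (fun P => x.descFactorial P.parts.card)]
  apply Finset.sum_congr rfl
  intro k _
  rw [hGS k]
  have hconst : ∑ P ∈ A.filter (fun P => P.parts.card = k), x.descFactorial P.parts.card
      = ∑ _P ∈ A.filter (fun P => P.parts.card = k), x.descFactorial k :=
    Finset.sum_congr rfl (fun P hP => by rw [(Finset.mem_filter.1 hP).2])
  rw [hconst, Finset.sum_const, smul_eq_mul]
  congr 1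
  rw [hA, Finset.filter_filter]

end PartitionCount

open SimpleGraph.Walk
section Tree

variable {V : Type} [DecidableEq V] {G : SimpleGraph V}

/-- the unique path from `v` to the root `r` in a tree -/
noncomputable def pathTo (hG : G.IsTree) (r v : V) : G.Walk v r :=
  (hG.existsUnique_path v r).choose

lemma pathTo_isPath (hG : G.IsTree) (r v : V) : (pathTo hG r v).IsPath :=
  (hG.existsUnique_path v r).choose_spec.1

lemma pathTo_unique (hG : G.IsTree) {r v : V} (p : G.Walk v r) (hp : p.IsPath) :
    p = pathTo hG r v :=
  (hG.existsUnique_path v r).choose_spec.2 p hp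

/-- distance to the root -/
noncomputable def dTo (hG : G.IsTree) (r v : V) : ℕ := (pathTo hG r v).length

/-- parent in the tree rooted at `r` -/
noncomputable def par (hG : G.IsTree) (r v : V) : V := (pathTo hG r v).getVert 1

lemma dTo_root (hG : G.IsTree) (r : V) : dTo hG r r = 0 := by
  have := pathTo_unique hG (Walk.nil : G.Walk r r) IsPath.nil
  rw [dTo, ← this, Walk.length_nil]

lemma ne_root_of_dTo_pos (hG : G.IsTree) {r v : V} (h : v ≠ r) : 0 < dTo hG r v := by
  rcases Nat.eq_zero_or_pos (dTo hG r v) with h0 | h0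
  · exact absurd (Walk.eq_of_length_eq_zero h0) h
  · exact h0

lemma par_spec (hG : G.IsTree) {r v : V} (h : v ≠ r) :
    G.Adj v (par hG r v) ∧
      dTo hG r (par hG r v) + 1 = dTo hG r v ∧ v ∉ (pathTo hG r (par hG r v)).support := by
  have hnn : ¬ (pathTo hG r v).Nil := by
    rw [Walk.nil_iff_length_eq]
    intro h0
    exact h (Walk.eq_of_length_eq_zero h0)
  obtain ⟨u, hadj, q, hq⟩ := Walk.not_nil_iff.1 hnn
  have hpu : par hG r v = u := by
    rw [par, hq, Walk.getVert_cons_succ, Walk.getVert_zero]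
  have hpath : ((Walk.cons hadj q)).IsPath := hq ▸ pathTo_isPath hG r v
  rw [Walk.cons_isPath_iff] at hpath
  have hqq : q = pathTo hG r u := pathTo_unique hG q hpath.1
  subst hpu
  refine ⟨hadj, ?_, ?_⟩
  · rw [dTo, dTo, ← hqq, hq, Walk.length_cons]
  · rw [← hqq]; exact hpath.2

lemma ne_root_of_adj_case (hG : G.IsTree) {r a b : V}
    (h : G.Adj a b) (hmem : a ∉ (pathTo hG r b).support) : a ≠ r ∧ par hG r a = b := by
  have hpath : (Walk.cons h (pathTo hG r b)).IsPath :=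
    (pathTo_isPath hG r b).cons hmem
  have huniq := pathTo_unique hG _ hpath
  have hne : a ≠ r := by
    intro hra
    subst hra
    have h0 := dTo_root hG a
    rw [dTo, ← huniq, Walk.length_cons] at h0
    omega
  refine ⟨hne, ?_⟩
  rw [par, ← huniq, Walk.getVert_cons_succ, Walk.getVert_zero]

lemma adj_classify (hG : G.IsTree) (r : V) {a b : V} (h : G.Adj a b) :
    (a ≠ r ∧ par hG r a = b) ∨ (b ≠ r ∧ par hG r b = a) := by
  by_cases hmem : a ∈ (pathTo hG r b).support
  · right
    -- show b ∉ support of dropUntil, then pathTo a = dropUntil and cons h.symm it is the path of b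
    set p := pathTo hG r b with hp
    have hq : (p.dropUntil a hmem).IsPath := (pathTo_isPath hG r b).dropUntil hmem
    have hqu := pathTo_unique hG _ hq
    have hbna : b ∉ (p.dropUntil a hmem).support := by
      have hnd := (pathTo_isPath hG r b).support_nodup
      have hsplit := p.take_spec hmem
      have : p.support = (p.takeUntil a hmem).support ++ (p.dropUntil a hmem).support.tail := by
        rw [← Walk.support_append, hsplit]
      rw [this] at hnd
      have hdisj := (List.nodup_append.1 hnd).2.2
      have hbtake : b ∈ (p.takeUntil a hmem).support := Walk.start_mem_support _
      have hbtail : b ∉ (p.dropUntil a hmem).support.tail := fun hb => hdisj b hbtake b hb rfl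
      rw [Walk.support_eq_cons]
      intro hb
      rcases List.mem_cons.1 hb with h1 | h1
      · exact h.ne' h1
      · exact hbtail h1
    rw [hqu] at hbna hq
    exact ne_root_of_adj_case hG h.symm hbna
  · left
    exact ne_root_of_adj_case hG h hmem

/-- Greedy reconstruction of a coloring from local data, by recursion on depth. -/
noncomputable def build {V : Type} [DecidableEq V] {m : ℕ} (r : V) (pa : V → V) (d : V → ℕ)
    (hpd : ∀ v, v ≠ r → d (pa v) < d v) (c : Fin (m + 1))
    (g : ∀ v : V, v ≠ r → Fin m) (v : V) : Fin (m + 1) :=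
  if h : v = r then c else (build r pa d hpd c g (pa v)).succAbove (g v h)
termination_by d v
decreasing_by exact hpd v h

lemma build_root {V : Type} [DecidableEq V] {m : ℕ} (r : V) (pa : V → V) (d : V → ℕ)
    (hpd : ∀ v, v ≠ r → d (pa v) < d v) (c : Fin (m + 1)) (g : ∀ v : V, v ≠ r → Fin m) :
    build r pa d hpd c g r = c := by
  rw [build]; simp

lemma build_ne {V : Type} [DecidableEq V] {m : ℕ} (r : V) (pa : V → V) (d : V → ℕ)
    (hpd : ∀ v, v ≠ r → d (pa v) < d v) (c : Fin (m + 1)) (g : ∀ v : V, v ≠ r → Fin m)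
    {v : V} (h : v ≠ r) :
    build r pa d hpd c g v = (build r pa d hpd c g (pa v)).succAbove (g v h) := by
  rw [build]; simp [h]

variable [Fintype V]

lemma card_proper_tree (hG : G.IsTree) (r : V) (m : ℕ) :
    Nat.card {f : V → Fin (m + 1) // ∀ u v, G.Adj u v → f u ≠ f v}
      = Nat.card (Fin (m + 1) × ({v : V // v ≠ r} → Fin m)) := by
  have hpd : ∀ v, v ≠ r → dTo hG r (par hG r v) < dTo hG r v := fun v h => by
    have := (par_spec hG h).2.1; omega
  apply Nat.card_congr
  refine ⟨fun f => (f.1 r, fun v =>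
      (Fin.exists_succAbove_eq (f.2 v.1 (par hG r v.1) (par_spec hG v.2).1)).choose),
    fun cg => ⟨build r (par hG r) (dTo hG r) hpd cg.1 (fun v h => cg.2 ⟨v, h⟩), ?_⟩, ?_, ?_⟩
  · intro a b hadj
    rcases adj_classify hG r hadj with ⟨ha, hpa⟩ | ⟨hb, hpb⟩
    · rw [build_ne r _ _ hpd _ _ ha, hpa]
      exact Fin.succAbove_ne _ _
    · rw [build_ne r _ _ hpd _ _ hb, hpb]
      exact (Fin.succAbove_ne _ _).symm
  · rintro ⟨f, hf⟩
    apply Subtype.ext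
    funext v
    simp only
    suffices h : ∀ N v, dTo hG r v < N →
        build r (par hG r) (dTo hG r) hpd (f r)
          (fun v h => (Fin.exists_succAbove_eq
            (hf v (par hG r v) (par_spec hG h).1)).choose) v = f v by
      exact h (dTo hG r v + 1) v (by omega)
    intro N
    induction N with
    | zero => omega
    | succ N ih =>
      intro v hv
      by_cases h : v = r
      · subst h; rw [build_root]
      · rw [build_ne r _ _ hpd _ _ h, ih (par hG r v) (by have := hpd v h; omega)]
        exact (Fin.exists_succAbove_eq (hf v (par hG r v) (par_spec hG h).1)).choose_spec
  · rintro ⟨c, g⟩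
    refine Prod.ext ?_ ?_
    · simp only
      exact build_root r _ _ hpd c _
    · funext v
      simp only
      apply Fin.succAbove_right_injective
        (p := build r (par hG r) (dTo hG r) hpd c (fun v h => g ⟨v, h⟩) (par hG r v.1))
      rw [(Fin.exists_succAbove_eq _).choose_spec]
      · rw [build_ne r _ _ hpd _ _ v.2]
      · rw [build_ne r _ _ hpd _ _ v.2]
        exact Fin.succAbove_ne _ _

end Tree

lemma graphStirling_eq_zero {V : Type} [Fintype V] [DecidableEq V] (G : SimpleGraph V) {k : ℕ}
    (hk : Fintype.card V < k) : graphStirling G k = 0 := by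
  have : IsEmpty {P : Finpartition (Finset.univ : Finset V) //
      P.parts.card = k ∧ ∀ p ∈ P.parts, ∀ u ∈ p, ∀ v ∈ p, ¬ G.Adj u v} := by
    refine ⟨fun P => ?_⟩
    have h1 := P.1.card_parts_le_card
    rw [Finset.card_univ] at h1
    have h2 := P.2.1
    omega
  rw [graphStirling, Nat.card_of_isEmpty]

lemma tree_chromaticCount {V : Type} [Fintype V] [DecidableEq V] {G : SimpleGraph V}
    (hG : G.IsTree) (x : ℕ) :
    chromaticCount G x = x * (x - 1) ^ (Fintype.card V - 1) := by
  have hne : Nonempty V := hG.isConnected.nonempty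
  cases x with
  | zero =>
    have : IsEmpty {f : V → Fin 0 // ∀ u v, G.Adj u v → f u ≠ f v} :=
      ⟨fun f => (f.1 (Classical.arbitrary V)).elim0⟩
    rw [chromaticCount, Nat.card_of_isEmpty, Nat.zero_mul]
  | succ m =>
    obtain ⟨r⟩ := hne
    have hcard : Fintype.card {v : V // v ≠ r} = Fintype.card V - 1 := by
      have h1 := Fintype.card_subtype_compl (fun v : V => v = r)
      rw [Fintype.card_subtype_eq] at h1
      exact h1
    rw [chromaticCount, card_proper_tree hG r m, Nat.card_eq_fintype_card,
      Fintype.card_prod, Fintype.card_fun, Fintype.card_fin, Fintype.card_fin, hcard]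
    simp

theorem tree_graphStirling_eq {V : Type} [Fintype V] [DecidableEq V]
    (G : SimpleGraph V) (hG : G.IsTree) (n : ℕ)
    (hn : Fintype.card V = n) (hn1 : 1 ≤ n) (k : ℕ) (hk : 1 ≤ k) :
    graphStirling G k = stirling2 (n - 1) (k - 1) := by
  classical
  subst hn
  set N := Fintype.card V with hN
  have hb : ∀ x : ℕ, ∑ j ∈ Finset.range (N+1), graphStirling G j * x.descFactorial j
      = ∑ j ∈ Finset.range (N+1),
          (if j = 0 then 0 else stirling2 (N-1) (j-1)) * x.descFactorial j := by
    intro x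
    rw [← chromaticCount_eq_sum, tree_chromaticCount hG]
    rw [Finset.sum_range_succ'
      (fun j => (if j = 0 then 0 else stirling2 (N-1) (j-1)) * x.descFactorial j)]
    simp only [if_pos rfl, if_true, Nat.zero_mul, add_zero, Nat.add_sub_cancel, if_neg (Nat.succ_ne_zero _)]
    cases x with
    | zero =>
      rw [Nat.zero_mul]
      symm
      apply Finset.sum_eq_zero
      intro j _
      rw [Nat.descFactorial_succ]
      simp
    | succ y =>
      have hstep : ∀ j : ℕ, (y+1).descFactorial (j+1) = (y+1) * y.descFactorial j :=
        fun j => Nat.succ_descFactorial_succ y j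
      calc (y + 1) * (y + 1 - 1) ^ (N - 1)
          = (y + 1) * y ^ (N - 1) := by rw [Nat.add_sub_cancel]
        _ = (y + 1) * ∑ j ∈ Finset.range ((N-1) + 1), stirling2 (N-1) j * y.descFactorial j := by
              rw [← sum_stirling2_descFactorial]
        _ = ∑ j ∈ Finset.range N, stirling2 (N-1) j * (y+1).descFactorial (j+1) := by
              rw [show (N - 1) + 1 = N from by omega, Finset.mul_sum]
              apply Finset.sum_congr rfl
              intro j _
              rw [hstep j]
              ring
  rcases le_or_gt k N with hkN | hkN
  · have hk' := extract_coeff hb k (by omega)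
    rw [hk', if_neg (by omega)]
  · rw [graphStirling_eq_zero G (by omega), stirling2_eq_zero (by omega)]
end

section
/- The number of partitions of the vertex set of a forest with n vertices and c components into k non-empty independent sets depends only on n and c, not on the structure of the forest. -/
open Finset SimpleGraph Polynomial

set_option linter.unusedSectionVars false


variable {V : Type} [Fintype V] [DecidableEq V]

def Indep (G : SimpleGraph V) {s : Finset V} (P : Finpartition s) : Prop :=
  ∀ p ∈ P.parts, ∀ u ∈ p, ∀ w ∈ p, ¬ G.Adj u w

lemma sup_parts_erase {s : Finset V} (Q : Finpartition s) {t : Finset V} (ht : t ∈ Q.parts) :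
    (Q.parts.erase t).sup id = s \ t := by
  have hd : Disjoint (id t) ((Q.parts.erase t).sup id) :=
    Q.supIndep (erase_subset _ _) ht (notMem_erase _ _)
  have hsup : id t ⊔ (Q.parts.erase t).sup id = s := by
    rw [← sup_insert, insert_erase ht, Q.sup_parts]
  exact (hd.sdiff_eq_of_sup_eq hsup).symm ▸ rfl

section master
variable (G : SimpleGraph V) (v : V)

/-- add `v` as a singleton part -/
def extendPart (P : Finpartition (univ.erase v : Finset V)) : Finpartition (univ : Finset V) :=
  P.extend (b := {v}) (by simp) (by simp [Finset.disjoint_singleton_right])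
    (by rw [sup_comm]; simp [Finset.sup_eq_union, Finset.insert_eq, ← Finset.insert_eq,
          Finset.insert_erase (Finset.mem_univ v)])

lemma extendPart_parts (P : Finpartition (univ.erase v : Finset V)) :
    (extendPart v P).parts = insert {v} P.parts := rfl

/-- add `v` to the part `p` -/
def insertPart (P : Finpartition (univ.erase v : Finset V)) (p : Finset V) (hp : p ∈ P.parts) :
    Finpartition (univ : Finset V) where
  parts := insert (insert v p) (P.parts.erase p)
  supIndep := by
    rw [supIndep_iff_pairwiseDisjoint, coe_insert]
    refine Set.Pairwise.insert ?_ ?_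
    · exact P.disjoint.subset (by simp [Finset.coe_subset, erase_subset])
    · intro q hq hne
      have hq' : q ∈ P.parts := mem_of_mem_erase hq
      have hvq : v ∉ q := fun h => (mem_erase.1 (P.le hq' h)).1 rfl
      have hdisj : Disjoint p q := P.disjoint hp hq' (fun h => (notMem_erase p P.parts) (h ▸ hq))
      have h1 : Disjoint (insert v p) q := by
        rw [Finset.disjoint_insert_left]; exact ⟨hvq, hdisj⟩
      exact ⟨h1, h1.symm⟩
  sup_parts := by
    rw [sup_insert]
    have : (P.parts.erase p).sup id = (univ.erase v) \ p := sup_parts_erase P hp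
    rw [this]
    ext a
    simp only [Finset.sup_eq_union, Finset.mem_union, Finset.mem_insert, Finset.mem_sdiff,
      Finset.mem_erase, Finset.mem_univ, and_true, true_and, id]
    by_cases hav : a = v
    · simp [hav]
    · by_cases hap : a ∈ p <;> simp [hav, hap]
  bot_notMem := by
    simp only [Finset.mem_insert, not_or]
    constructor
    · intro h; exact (Finset.insert_ne_empty v p) h.symm
    · intro h; exact P.bot_notMem (mem_of_mem_erase h)

lemma insertPart_parts (P : Finpartition (univ.erase v : Finset V)) (p : Finset V)
    (hp : p ∈ P.parts) :
    (insertPart v P p hp).parts = insert (insert v p) (P.parts.erase p) := rfl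

lemma not_mem_of_mem_parts {P : Finpartition (univ.erase v : Finset V)} {q : Finset V}
    (hq : q ∈ P.parts) : v ∉ q := fun h => (Finset.mem_erase.1 (P.le hq h)).1 rfl

variable (k : ℕ)

def T0 : Type := {P : Finpartition (univ : Finset V) // P.parts.card = k + 1 ∧ Indep G P}
def T1 : Type := {P : Finpartition (univ.erase v : Finset V) // P.parts.card = k ∧ Indep G P}
def T2 : Type := Σ P : {P : Finpartition (univ.erase v : Finset V) //
      P.parts.card = k + 1 ∧ Indep G P},
    {p : Finset V // p ∈ P.1.parts ∧ ∀ u ∈ p, ¬ G.Adj v u}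

def masterFun : T1 G v k ⊕ T2 G v k → T0 G k
  | .inl ⟨P, hk, hI⟩ => ⟨extendPart v P, by
      constructor
      · rw [extendPart_parts, Finset.card_insert_of_notMem, hk]
        intro h
        exact not_mem_of_mem_parts v h (Finset.mem_singleton_self v)
      · intro q hq u hu w hw
        rw [extendPart_parts, Finset.mem_insert] at hq
        rcases hq with rfl | hq
        · rw [Finset.mem_singleton] at hu hw
          subst hu; subst hw; exact G.irrefl
        · exact hI q hq u hu w hw⟩
  | .inr ⟨⟨P, hk, hI⟩, ⟨p, hp, hpv⟩⟩ => ⟨insertPart v P p hp, by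
      constructor
      · rw [insertPart_parts, Finset.card_insert_of_notMem (fun h =>
          not_mem_of_mem_parts v (Finset.mem_of_mem_erase h) (Finset.mem_insert_self v p)),
          Finset.card_erase_of_mem hp, hk]
        omega
      · intro q hq u hu w hw
        rw [insertPart_parts, Finset.mem_insert] at hq
        rcases hq with rfl | hq
        · rw [Finset.mem_insert] at hu hw
          rcases hu with rfl | hu <;> rcases hw with rfl | hw
          · exact G.irrefl
          · exact hpv w hw
          · intro h; exact hpv u hu h.symm
          · exact hI p hp u hu w hw
        · exact hI q (Finset.mem_of_mem_erase hq) u hu w hw⟩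

lemma part_v_extendPart (P : Finpartition (univ.erase v : Finset V)) :
    (extendPart v P).part v = {v} :=
  Finpartition.part_eq_of_mem _ (by rw [extendPart_parts]; exact Finset.mem_insert_self _ _)
    (Finset.mem_singleton_self v)

lemma part_v_insertPart (P : Finpartition (univ.erase v : Finset V)) (p : Finset V)
    (hp : p ∈ P.parts) : (insertPart v P p hp).part v = insert v p :=
  Finpartition.part_eq_of_mem _ (by rw [insertPart_parts]; exact Finset.mem_insert_self _ _)
    (Finset.mem_insert_self v p)

lemma masterFun_injective : Function.Injective (masterFun G v k) := by
  rintro (⟨P₁, hk₁, hI₁⟩ | ⟨⟨P₁, hk₁, hI₁⟩, ⟨p₁, hp₁, hv₁⟩⟩)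
    (⟨P₂, hk₂, hI₂⟩ | ⟨⟨P₂, hk₂, hI₂⟩, ⟨p₂, hp₂, hv₂⟩⟩) h <;>
    replace h := congrArg Subtype.val h
  · have hparts : insert {v} P₁.parts = insert {v} P₂.parts := by
      rw [← extendPart_parts v P₁, ← extendPart_parts v P₂]
      exact congrArg Finpartition.parts h
    have h12 : P₁.parts = P₂.parts := by
      have e1 : ({v} : Finset V) ∉ P₁.parts :=
        fun hc => not_mem_of_mem_parts v hc (Finset.mem_singleton_self v)
      have e2 : ({v} : Finset V) ∉ P₂.parts :=
        fun hc => not_mem_of_mem_parts v hc (Finset.mem_singleton_self v)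
      rw [← Finset.erase_insert e1, ← Finset.erase_insert e2, hparts]
    obtain rfl := Finpartition.ext h12
    rfl
  · exfalso
    have hval : extendPart v P₁ = insertPart v P₂ p₂ hp₂ := h
    have h1 := part_v_extendPart v P₁
    have h2 := part_v_insertPart v P₂ p₂ hp₂
    rw [hval] at h1
    rw [h1] at h2
    obtain ⟨x, hx⟩ := P₂.nonempty_of_mem_parts hp₂
    have : x ∈ ({v} : Finset V) := h2 ▸ Finset.mem_insert_of_mem hx
    rw [Finset.mem_singleton] at this
    exact not_mem_of_mem_parts v hp₂ (this ▸ hx)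
  · exfalso
    have hval : insertPart v P₁ p₁ hp₁ = extendPart v P₂ := h
    have h1 := part_v_extendPart v P₂
    have h2 := part_v_insertPart v P₁ p₁ hp₁
    rw [← hval] at h1
    rw [h1] at h2
    obtain ⟨x, hx⟩ := P₁.nonempty_of_mem_parts hp₁
    have : x ∈ ({v} : Finset V) := h2 ▸ Finset.mem_insert_of_mem hx
    rw [Finset.mem_singleton] at this
    exact not_mem_of_mem_parts v hp₁ (this ▸ hx)
  · have hval : insertPart v P₁ p₁ hp₁ = insertPart v P₂ p₂ hp₂ := h
    have h1 := part_v_insertPart v P₁ p₁ hp₁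
    have h2 := part_v_insertPart v P₂ p₂ hp₂
    rw [hval] at h1
    have hip : insert v p₁ = insert v p₂ := by rw [← h1, h2]
    have hpp : p₁ = p₂ := by
      have e1 : v ∉ p₁ := not_mem_of_mem_parts v hp₁
      have e2 : v ∉ p₂ := not_mem_of_mem_parts v hp₂
      rw [← Finset.erase_insert e1, ← Finset.erase_insert e2, hip]
    subst hpp
    have hparts : P₁.parts = P₂.parts := by
      have key : insert (insert v p₁) (P₁.parts.erase p₁)
          = insert (insert v p₁) (P₂.parts.erase p₁) := by
        rw [← insertPart_parts v P₁ p₁ hp₁, ← insertPart_parts v P₂ p₁ hp₂]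
        exact congrArg Finpartition.parts hval
      have e1 : insert v p₁ ∉ P₁.parts.erase p₁ := fun hc =>
        not_mem_of_mem_parts v (Finset.mem_of_mem_erase hc) (Finset.mem_insert_self v p₁)
      have e2 : insert v p₁ ∉ P₂.parts.erase p₁ := fun hc =>
        not_mem_of_mem_parts v (Finset.mem_of_mem_erase hc) (Finset.mem_insert_self v p₁)
      have : P₁.parts.erase p₁ = P₂.parts.erase p₁ := by
        rw [← Finset.erase_insert e1, ← Finset.erase_insert e2, key]
      rw [← Finset.insert_erase hp₁, ← Finset.insert_erase hp₂, this]
    have hPP : P₁ = P₂ := Finpartition.ext hparts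
    subst hPP
    rfl

/-- remove `v` from its (non-singleton) part -/
def deletePart (Q : Finpartition (univ : Finset V)) (t : Finset V) (ht : t ∈ Q.parts)
    (hvt : v ∈ t) (hne : t.erase v ≠ ∅) : Finpartition (univ.erase v : Finset V) where
  parts := insert (t.erase v) (Q.parts.erase t)
  supIndep := by
    rw [supIndep_iff_pairwiseDisjoint, coe_insert]
    refine Set.Pairwise.insert ?_ ?_
    · exact Q.disjoint.subset (by simp [Finset.coe_subset, erase_subset])
    · intro q hq hne'
      have hq' : q ∈ Q.parts := mem_of_mem_erase hq
      have hqt : q ≠ t := (Finset.mem_erase.1 hq).1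
      have hdisj : Disjoint t q := Q.disjoint ht hq' (fun h => hqt h.symm)
      have h1 : Disjoint (t.erase v) q := hdisj.mono_left (erase_subset v t)
      exact ⟨h1, h1.symm⟩
  sup_parts := by
    rw [sup_insert]
    rw [sup_parts_erase Q ht]
    ext a
    simp only [Finset.sup_eq_union, Finset.mem_union, Finset.mem_erase, Finset.mem_sdiff,
      Finset.mem_univ, and_true, true_and, id]
    constructor
    · rintro (⟨hav, _⟩ | hat)
      · exact hav
      · intro h; subst h; exact hat hvt
    · intro hav
      by_cases hat : a ∈ t
      · exact Or.inl ⟨hav, hat⟩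
      · exact Or.inr hat
  bot_notMem := by
    simp only [Finset.mem_insert, not_or, Finset.bot_eq_empty]
    exact ⟨fun h => hne h.symm, fun h => Q.bot_notMem (mem_of_mem_erase h)⟩

lemma masterFun_surjective : Function.Surjective (masterFun G v k) := by
  rintro ⟨Q, hk, hI⟩
  set t := Q.part v with htdef
  have ht : t ∈ Q.parts := Q.part_mem.2 (mem_univ v)
  have hvt : v ∈ t := Q.mem_part (mem_univ v)
  by_cases hsing : t = {v}
  · -- singleton part
    have hsub : Q.parts.erase t ⊆ Q.parts := erase_subset _ _
    have hsup : (Q.parts.erase t).sup id = univ.erase v := by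
      rw [sup_parts_erase Q ht, hsing, ← Finset.erase_eq]
    refine ⟨.inl ⟨Q.ofSubset hsub hsup, ?_, ?_⟩, ?_⟩
    · simp only [Finpartition.ofSubset]
      rw [Finset.card_erase_of_mem ht, hk]
      omega
    · intro q hq u hu w hw
      exact hI q (hsub hq) u hu w hw
    · apply Subtype.ext
      apply Finpartition.ext
      show insert {v} ((Q.ofSubset hsub hsup).parts) = Q.parts
      show insert {v} (Q.parts.erase t) = Q.parts
      rw [← hsing, Finset.insert_erase ht]
  · -- non-singleton part
    have hne : t.erase v ≠ ∅ := by
      intro h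
      apply hsing
      apply Finset.Subset.antisymm
      · intro x hx
        rw [Finset.mem_singleton]
        by_contra hxv
        exact absurd (Finset.mem_erase.2 ⟨hxv, hx⟩) (by rw [h]; exact Finset.notMem_empty x)
      · intro x hx
        rw [Finset.mem_singleton] at hx
        exact hx ▸ hvt
    set P' := deletePart v Q t ht hvt hne with hP'
    have hpmem : t.erase v ∈ P'.parts := Finset.mem_insert_self _ _
    have htep : t.erase v ∉ Q.parts.erase t := by
      intro hc
      have hc' : t.erase v ∈ Q.parts := mem_of_mem_erase hc
      obtain ⟨x, hx⟩ := Finset.nonempty_iff_ne_empty.2 hne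
      have heq : t.erase v = t := Q.eq_of_mem_parts hc' ht hx (Finset.mem_of_mem_erase hx)
      have hvt' : v ∈ t.erase v := by rw [heq]; exact hvt
      exact (Finset.mem_erase.1 hvt').1 rfl
    refine ⟨.inr ⟨⟨P', ?_, ?_⟩, ⟨t.erase v, hpmem, ?_⟩⟩, ?_⟩
    · show (insert (t.erase v) (Q.parts.erase t)).card = k + 1
      rw [Finset.card_insert_of_notMem htep, Finset.card_erase_of_mem ht, hk]
      omega
    · intro q hq u hu w hw
      rcases Finset.mem_insert.1 hq with rfl | hq'
      · exact hI t ht u (Finset.mem_of_mem_erase hu) w (Finset.mem_of_mem_erase hw)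
      · exact hI q (mem_of_mem_erase hq') u hu w hw
    · intro u hu
      exact hI t ht v hvt u (Finset.mem_of_mem_erase hu)
    · apply Subtype.ext
      apply Finpartition.ext
      show insert (insert v (t.erase v)) (P'.parts.erase (t.erase v)) = Q.parts
      have h1 : insert v (t.erase v) = t := Finset.insert_erase hvt
      have h2 : P'.parts.erase (t.erase v) = Q.parts.erase t := by
        show (insert (t.erase v) (Q.parts.erase t)).erase (t.erase v) = _
        rw [Finset.erase_insert htep]
      rw [h1, h2, Finset.insert_erase ht]

instance : Finite (T0 G k) := by unfold T0; infer_instance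
instance : Finite (T1 G v k) := by unfold T1; infer_instance
instance : Finite (T2 G v k) := by unfold T2; infer_instance

lemma master_card : Nat.card (T0 G k) = Nat.card (T1 G v k) + Nat.card (T2 G v k) := by
  have hb : Function.Bijective (masterFun G v k) :=
    ⟨masterFun_injective G v k, masterFun_surjective G v k⟩
  rw [← Nat.card_eq_of_bijective _ hb, Nat.card_sum]

lemma nat_card_sigma_const {ι : Type} [Finite ι] {β : ι → Type} [∀ i, Finite (β i)] {m : ℕ}
    (h : ∀ i, Nat.card (β i) = m) : Nat.card (Sigma β) = m * Nat.card ι := by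
  classical
  cases nonempty_fintype ι
  letI : ∀ i, Fintype (β i) := fun i => Fintype.ofFinite _
  rw [Nat.card_eq_fintype_card, Fintype.card_sigma, Nat.card_eq_fintype_card]
  have h' : ∀ i, Fintype.card (β i) = m := fun i => by rw [← Nat.card_eq_fintype_card, h]
  simp [h', Finset.sum_const, mul_comm]

lemma card_T2_isolated (hv : ∀ u, ¬ G.Adj v u) :
    Nat.card (T2 G v k) = (k + 1) * Nat.card (T1 G v (k + 1)) := by
  refine nat_card_sigma_const (fun P => ?_)
  have e : {p : Finset V // p ∈ P.1.parts ∧ ∀ u ∈ p, ¬ G.Adj v u} ≃ {p // p ∈ P.1.parts} :=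
    Equiv.subtypeEquivRight (fun p => and_iff_left (fun u _ => hv u))
  rw [Nat.card_congr e, Nat.card_eq_fintype_card, Fintype.card_coe, P.2.1]

lemma card_T2_leaf {u : V} (hadj : G.Adj v u) (huniq : ∀ w, G.Adj v w → w = u) :
    Nat.card (T2 G v k) = k * Nat.card (T1 G v (k + 1)) := by
  refine nat_card_sigma_const (fun P => ?_)
  have hvu : u ≠ v := fun h => G.irrefl (h ▸ hadj)
  have hu : u ∈ (univ.erase v : Finset V) := Finset.mem_erase.2 ⟨hvu, mem_univ u⟩
  have hcond : ∀ p, (p ∈ P.1.parts ∧ ∀ w ∈ p, ¬ G.Adj v w) ↔ (p ∈ P.1.parts ∧ u ∉ p) := by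
    intro p
    constructor
    · rintro ⟨hp, h⟩; exact ⟨hp, fun hup => h u hup hadj⟩
    · rintro ⟨hp, h⟩
      refine ⟨hp, fun w hw hadj' => h ?_⟩
      rwa [← huniq w hadj']
  have e : {p : Finset V // p ∈ P.1.parts ∧ ∀ w ∈ p, ¬ G.Adj v w}
      ≃ {p // p ∈ P.1.parts.filter (fun p => u ∉ p)} :=
    Equiv.subtypeEquivRight (fun p => by rw [hcond p, Finset.mem_filter])
  rw [Nat.card_congr e, Nat.card_eq_fintype_card, Fintype.card_coe]
  have hfil : P.1.parts.filter (fun p => u ∉ p) = P.1.parts.erase (P.1.part u) := by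
    ext q
    simp only [Finset.mem_filter, Finset.mem_erase]
    constructor
    · rintro ⟨hq, hup⟩
      refine ⟨fun h => hup ?_, hq⟩
      rw [h]; exact P.1.mem_part hu
    · rintro ⟨hne, hq⟩
      refine ⟨hq, fun hup => hne ?_⟩
      exact (P.1.part_eq_of_mem hq hup).symm
  rw [hfil, Finset.card_erase_of_mem (P.1.part_mem.2 hu), P.2.1]
  omega

section transfer
variable (hG : True)

abbrev V' : Type := {u : V // u ≠ v}

instance : Fintype (V' v) := by unfold V'; infer_instance
instance : DecidableEq (V' v) := by unfold V'; infer_instance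

def emb : V' v ↪ V := Function.Embedding.subtype _

def mapEmb : Finset (V' v) ↪ Finset V := ⟨fun p => p.map (emb v), Finset.map_injective _⟩

lemma transferBack_mem {p : Finset V} (hp : p ⊆ univ.erase v) {a : V} (ha : a ∈ p) : a ≠ v :=
  (Finset.mem_erase.1 (hp ha)).1

/-- partition of the subtype from a partition of `univ.erase v` -/
def transferFun (P : Finpartition (univ.erase v : Finset V)) :
    Finpartition (univ : Finset (V' v)) where
  parts := P.parts.image (fun p => p.subtype (· ≠ v))
  supIndep := by
    rw [supIndep_iff_pairwiseDisjoint]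
    rintro q₁ hq₁ q₂ hq₂ hne
    simp only [coe_image, Set.mem_image, Finset.mem_coe] at hq₁ hq₂
    obtain ⟨p₁, hp₁, rfl⟩ := hq₁
    obtain ⟨p₂, hp₂, rfl⟩ := hq₂
    have hpne : p₁ ≠ p₂ := fun h => hne (by rw [h])
    have hdisj : Disjoint p₁ p₂ := P.disjoint hp₁ hp₂ hpne
    simp only [Function.onFun, id_eq]
    rw [Finset.disjoint_left]
    intro x hx₁ hx₂
    rw [Finset.mem_subtype] at hx₁ hx₂
    exact (Finset.disjoint_left.1 hdisj) hx₁ hx₂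
  sup_parts := by
    ext x
    simp only [Finset.mem_sup, Finset.mem_image, Finset.mem_univ, iff_true]
    have hx : x.val ∈ (univ.erase v : Finset V) := Finset.mem_erase.2 ⟨x.2, mem_univ _⟩
    rw [← P.sup_parts, Finset.mem_sup] at hx
    obtain ⟨p, hp, hxp⟩ := hx
    exact ⟨p.subtype (· ≠ v), ⟨p, hp, rfl⟩, Finset.mem_subtype.2 hxp⟩
  bot_notMem := by
    simp only [Finset.bot_eq_empty, Finset.mem_image, not_exists]
    rintro p ⟨hp, hsub⟩
    obtain ⟨a, ha⟩ := P.nonempty_of_mem_parts hp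
    have hav : a ≠ v := transferBack_mem v (P.le hp) ha
    have : (⟨a, hav⟩ : V' v) ∈ p.subtype (· ≠ v) := Finset.mem_subtype.2 ha
    rw [hsub] at this
    exact Finset.notMem_empty _ this

lemma subtype_map_eq {p : Finset V} (hp : p ⊆ univ.erase v) :
    (p.subtype (· ≠ v)).map (emb v) = p := by
  unfold emb
  rw [Finset.subtype_map]
  exact Finset.filter_true_of_mem (fun a ha => transferBack_mem v hp ha)

lemma transferFun_injective : Function.Injective (transferFun v) := by
  intro P₁ P₂ h
  apply Finpartition.ext
  have h' := congrArg Finpartition.parts h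
  simp only [transferFun] at h'
  ext p
  constructor
  · intro hp
    have : p.subtype (· ≠ v) ∈ P₂.parts.image (fun p => p.subtype (· ≠ v)) := by
      rw [← h']; exact Finset.mem_image_of_mem _ hp
    obtain ⟨q, hq, hqe⟩ := Finset.mem_image.1 this
    have : q = p := by
      rw [← subtype_map_eq v (P₂.le hq), ← subtype_map_eq v (P₁.le hp), hqe]
    exact this ▸ hq
  · intro hp
    have : p.subtype (· ≠ v) ∈ P₁.parts.image (fun p => p.subtype (· ≠ v)) := by
      rw [h']; exact Finset.mem_image_of_mem _ hp
    obtain ⟨q, hq, hqe⟩ := Finset.mem_image.1 this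
    have : q = p := by
      rw [← subtype_map_eq v (P₁.le hq), ← subtype_map_eq v (P₂.le hp), hqe]
    exact this ▸ hq

/-- partition of `univ.erase v` from a partition of the subtype -/
def transferInv (Q : Finpartition (univ : Finset (V' v))) :
    Finpartition (univ.erase v : Finset V) where
  parts := Q.parts.map (mapEmb v)
  supIndep := by
    rw [supIndep_iff_pairwiseDisjoint]
    rintro q₁ hq₁ q₂ hq₂ hne
    simp only [coe_map, Set.mem_image, Finset.mem_coe] at hq₁ hq₂
    obtain ⟨p₁, hp₁, rfl⟩ := hq₁
    obtain ⟨p₂, hp₂, rfl⟩ := hq₂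
    have hpne : p₁ ≠ p₂ := fun h => hne (by rw [h])
    have hdisj : Disjoint p₁ p₂ := Q.disjoint hp₁ hp₂ hpne
    simp only [Function.onFun, mapEmb, Function.Embedding.coeFn_mk, id_eq]
    rw [Finset.disjoint_map]
    exact hdisj
  sup_parts := by
    ext a
    simp only [Finset.mem_sup, Finset.mem_map, mapEmb, Function.Embedding.coeFn_mk, id]
    constructor
    · rintro ⟨q, ⟨p, hp, rfl⟩, haq⟩
      obtain ⟨x, _, rfl⟩ := Finset.mem_map.1 haq
      exact Finset.mem_erase.2 ⟨x.2, mem_univ _⟩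
    · intro ha
      have hav : a ≠ v := (Finset.mem_erase.1 ha).1
      have : (⟨a, hav⟩ : V' v) ∈ (univ : Finset (V' v)) := mem_univ _
      rw [← Q.sup_parts, Finset.mem_sup] at this
      obtain ⟨p, hp, hxp⟩ := this
      exact ⟨p.map (emb v), ⟨p, hp, rfl⟩, Finset.mem_map_of_mem _ hxp⟩
  bot_notMem := by
    simp only [Finset.bot_eq_empty, Finset.mem_map, not_exists]
    rintro p ⟨hp, hsub⟩
    obtain ⟨x, hx⟩ := Q.nonempty_of_mem_parts hp
    have : (emb v) x ∈ (mapEmb v) p := Finset.mem_map_of_mem _ hx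
    rw [hsub] at this
    exact Finset.notMem_empty _ this

lemma mapEmb_subset (p : Finset (V' v)) : ((mapEmb v) p : Finset V) ⊆ univ.erase v := by
  intro a ha
  simp only [mapEmb, Function.Embedding.coeFn_mk] at ha
  obtain ⟨x, _, rfl⟩ := Finset.mem_map.1 ha
  exact Finset.mem_erase.2 ⟨x.2, mem_univ _⟩

lemma transferFun_surjective : Function.Surjective (transferFun v) := by
  intro Q
  refine ⟨transferInv v Q, ?_⟩
  apply Finpartition.ext
  show (transferInv v Q).parts.image (fun p => p.subtype (· ≠ v)) = Q.parts
  simp only [transferInv, Finset.map_eq_image, Finset.image_image]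
  ext q
  simp only [Finset.mem_image, Function.comp]
  constructor
  · rintro ⟨p, hp, rfl⟩
    have : ((mapEmb v) p).subtype (· ≠ v) = p := by
      apply Finset.map_injective (emb v)
      rw [subtype_map_eq v (mapEmb_subset v p)]
      rfl
    rw [this]; exact hp
  · intro hq
    refine ⟨q, hq, ?_⟩
    apply Finset.map_injective (emb v)
    rw [subtype_map_eq v (mapEmb_subset v q)]
    rfl

end transfer

noncomputable def transferEquiv : Finpartition (univ.erase v : Finset V) ≃ Finpartition (univ : Finset (V' v)) :=
  Equiv.ofBijective _ ⟨transferFun_injective v, transferFun_surjective v⟩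

lemma graphStirling_T1 :
    graphStirling (SimpleGraph.comap (fun x : V' v => x.val) G) k = Nat.card (T1 G v k) := by
  rw [graphStirling, T1]
  refine Nat.card_congr ((Equiv.subtypeEquiv (transferEquiv v) (fun P => ?_)).symm)
  have hparts : (transferEquiv v P).parts = P.parts.image (fun p => p.subtype (· ≠ v)) := rfl
  constructor
  · rintro ⟨hcard, hI⟩
    constructor
    · rw [hparts, Finset.card_image_of_injOn, hcard]
      intro p hp q hq hpq
      have hpq' : p.subtype (· ≠ v) = q.subtype (· ≠ v) := hpq
      rw [← subtype_map_eq v (P.le (Finset.mem_coe.1 hp)),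
        ← subtype_map_eq v (P.le (Finset.mem_coe.1 hq)), hpq']
    · intro q hq x hx y hy
      rw [hparts] at hq
      obtain ⟨p, hp, rfl⟩ := Finset.mem_image.1 hq
      simp only [comap_adj]
      exact hI p hp x.val (Finset.mem_subtype.1 hx) y.val (Finset.mem_subtype.1 hy)
  · rintro ⟨hcard, hI⟩
    constructor
    · rw [hparts, Finset.card_image_of_injOn] at hcard
      · exact hcard
      intro p hp q hq hpq
      have hpq' : p.subtype (· ≠ v) = q.subtype (· ≠ v) := hpq
      rw [← subtype_map_eq v (P.le (Finset.mem_coe.1 hp)),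
        ← subtype_map_eq v (P.le (Finset.mem_coe.1 hq)), hpq']
    · intro p hp a ha b hb
      have hav : a ≠ v := transferBack_mem v (P.le hp) ha
      have hbv : b ≠ v := transferBack_mem v (P.le hp) hb
      have := hI (p.subtype (· ≠ v)) (by rw [hparts]; exact Finset.mem_image_of_mem _ hp)
        ⟨a, hav⟩ (Finset.mem_subtype.2 ha) ⟨b, hbv⟩ (Finset.mem_subtype.2 hb)
      simpa only [comap_adj] using this

lemma graphStirling_zero_of_nonempty [Nonempty V] :
    graphStirling G 0 = 0 := by
  rw [graphStirling]
  rw [Nat.card_eq_zero]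
  left
  rw [isEmpty_iff]
  rintro ⟨P, hcard, -⟩
  have h0 : P.parts = ∅ := Finset.card_eq_zero.1 hcard
  have := P.sup_parts
  rw [h0] at this
  simp only [Finset.sup_empty, Finset.bot_eq_empty] at this
  exact Finset.notMem_empty (Classical.arbitrary V) (this ▸ mem_univ _)

/-- the master recursions in terms of `graphStirling` -/
lemma graphStirling_isolated (hv : ∀ u, ¬ G.Adj v u) :
    graphStirling G (k + 1) =
      graphStirling (SimpleGraph.comap (fun x : V' v => x.val) G) k
      + (k + 1) * graphStirling (SimpleGraph.comap (fun x : V' v => x.val) G) (k + 1) := by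
  rw [graphStirling_T1, graphStirling_T1]
  have h0 : graphStirling G (k+1) = Nat.card (T0 G k) := rfl
  rw [h0, master_card G v k, card_T2_isolated G v k hv]

lemma graphStirling_leaf {u : V} (hadj : G.Adj v u) (huniq : ∀ w, G.Adj v w → w = u) :
    graphStirling G (k + 1) =
      graphStirling (SimpleGraph.comap (fun x : V' v => x.val) G) k
      + k * graphStirling (SimpleGraph.comap (fun x : V' v => x.val) G) (k + 1) := by
  rw [graphStirling_T1, graphStirling_T1]
  have h0 : graphStirling G (k+1) = Nat.card (T0 G k) := rfl
  rw [h0, master_card G v k, card_T2_leaf G v k hadj huniq]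

section graphs

/-- inclusion hom from induced subgraph -/
def ι : (SimpleGraph.comap (fun x : V' v => x.val) G) →g G :=
  ⟨fun x => x.val, fun h => h⟩

lemma acyclic_comap (h : G.IsAcyclic) :
    (SimpleGraph.comap (fun x : V' v => x.val) G).IsAcyclic := by
  intro x c hc
  exact h (c.map (ι G v)) (hc.map (fun a b hab => Subtype.ext hab))

lemma walk_avoid {a b : V} (w : G.Walk a b) (hs : v ∉ w.support)
    (hav : a ≠ v) (hbv : b ≠ v) :
    (SimpleGraph.comap (fun x : V' v => x.val) G).Reachable ⟨a, hav⟩ ⟨b, hbv⟩ := by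
  induction w with
  | nil => rfl
  | @cons x y z h p ih =>
    rw [Walk.support_cons, List.mem_cons] at hs
    push_neg at hs
    have hyv : y ≠ v := fun hc => hs.2 (hc ▸ p.start_mem_support)
    exact (SimpleGraph.Adj.reachable (by exact h :
      (SimpleGraph.comap (fun x : V' v => x.val) G).Adj ⟨x, hav⟩ ⟨y, hyv⟩)).trans
      (ih hs.2 hyv hbv)

lemma surgery {u : V} (huniq : ∀ w, G.Adj v w → w = u) :
    ∀ (n : ℕ) {a b : V} (w : G.Walk a b), w.length ≤ n → ∀ (hav : a ≠ v) (hbv : b ≠ v),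
      (SimpleGraph.comap (fun x : V' v => x.val) G).Reachable ⟨a, hav⟩ ⟨b, hbv⟩ := by
  intro n
  induction n with
  | zero =>
    intro a b w hlen hav hbv
    obtain rfl := Walk.eq_of_length_eq_zero (Nat.le_zero.1 hlen)
    rfl
  | succ n ih =>
    intro a b w hlen hav hbv
    by_cases hv : v ∈ w.support
    · have hvb : v ≠ b := fun hc => hbv hc.symm
      have hva : v ≠ a := fun hc => hav hc.symm
      set w₁ := w.takeUntil v hv with hw₁
      set w₂ := w.dropUntil v hv with hw₂
      have hlen12 : w₁.length + w₂.length = w.length := by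
        rw [← Walk.length_append, Walk.take_spec]
      obtain ⟨x, hadjx, w₂', hw₂'⟩ := Walk.exists_eq_cons_of_ne hvb w₂
      obtain ⟨y, hadjy, r, hr⟩ := Walk.exists_eq_cons_of_ne hva w₁.reverse
      obtain rfl : y = x := (huniq y hadjy).trans (huniq x hadjx).symm
      have hlen' : (r.reverse.append w₂').length ≤ n := by
        have h1 : w₁.length = r.length + 1 := by
          rw [← Walk.length_reverse w₁, hr, Walk.length_cons]
        have h2 : w₂.length = w₂'.length + 1 := by rw [hw₂', Walk.length_cons]
        rw [Walk.length_append, Walk.length_reverse]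
        omega
      exact ih (r.reverse.append w₂') hlen' hav hbv
    · exact walk_avoid G v w hv hav hbv

lemma reach_reflect {u : V} (huniq : ∀ w, G.Adj v w → w = u) {a b : V}
    (hav : a ≠ v) (hbv : b ≠ v) (h : G.Reachable a b) :
    (SimpleGraph.comap (fun x : V' v => x.val) G).Reachable ⟨a, hav⟩ ⟨b, hbv⟩ := by
  obtain ⟨w⟩ := h
  exact surgery G v huniq w.length w le_rfl hav hbv

lemma cc_card_leaf {u : V} (hadj : G.Adj v u) (huniq : ∀ w, G.Adj v w → w = u) :
    Nat.card G.ConnectedComponent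
      = Nat.card (SimpleGraph.comap (fun x : V' v => x.val) G).ConnectedComponent := by
  refine (Nat.card_eq_of_bijective (ConnectedComponent.map (ι G v)) ⟨?_, ?_⟩).symm
  · intro c₁ c₂
    refine ConnectedComponent.ind₂ (fun x y h => ?_) c₁ c₂
    have : G.Reachable x.val y.val := ConnectedComponent.eq.1 h
    rw [ConnectedComponent.eq]
    have := reach_reflect G v huniq x.2 y.2 this
    exact this
  · refine ConnectedComponent.ind (fun x => ?_)
    by_cases hx : x = v
    · have huv : u ≠ v := fun h => G.irrefl (h ▸ hadj)
      refine ⟨SimpleGraph.connectedComponentMk _ ⟨u, huv⟩, ?_⟩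
      show G.connectedComponentMk u = G.connectedComponentMk x
      rw [ConnectedComponent.eq, hx]
      exact hadj.reachable.symm
    · exact ⟨SimpleGraph.connectedComponentMk _ ⟨x, hx⟩, rfl⟩

end graphs

section more
lemma nat_card_option (X : Type) [Finite X] : Nat.card (Option X) = Nat.card X + 1 := by
  rw [Nat.card_congr (Equiv.optionEquivSumPUnit X : Option X ≃ X ⊕ PUnit.{1}), Nat.card_sum]
  simp

lemma cc_card_isolated (hv : ∀ w, ¬ G.Adj v w) :
    Nat.card G.ConnectedComponent
      = Nat.card (SimpleGraph.comap (fun x : V' v => x.val) G).ConnectedComponent + 1 := by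
  have huniq : ∀ w, G.Adj v w → w = v := fun w h => absurd h (hv w)
  rw [← nat_card_option]
  refine (Nat.card_eq_of_bijective
    (fun o => o.elim (G.connectedComponentMk v) (ConnectedComponent.map (ι G v))) ⟨?_, ?_⟩).symm
  · rintro (_ | c₁) (_ | c₂) h
    · rfl
    · exfalso
      revert h
      refine ConnectedComponent.ind (fun x => ?_) c₂
      intro h
      have hr : G.Reachable v x.val := ConnectedComponent.eq.1 h
      obtain ⟨w⟩ := hr
      have : v ≠ x.val := fun hc => x.2 hc.symm
      obtain ⟨y, hadjy, -, -⟩ := Walk.exists_eq_cons_of_ne this w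
      exact hv y hadjy
    · exfalso
      revert h
      refine ConnectedComponent.ind (fun x => ?_) c₁
      intro h
      have hr : G.Reachable v x.val := (ConnectedComponent.eq.1 h).symm
      obtain ⟨w⟩ := hr
      have : v ≠ x.val := fun hc => x.2 hc.symm
      obtain ⟨y, hadjy, -, -⟩ := Walk.exists_eq_cons_of_ne this w
      exact hv y hadjy
    · congr 1
      revert h
      refine ConnectedComponent.ind₂ (fun x y => ?_) c₁ c₂
      intro h
      have hr : G.Reachable x.val y.val := ConnectedComponent.eq.1 h
      exact ConnectedComponent.eq.2 (reach_reflect G v huniq x.2 y.2 hr)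
  · refine ConnectedComponent.ind (fun x => ?_)
    by_cases hx : x = v
    · exact ⟨none, by simp [hx]⟩
    · exact ⟨some (SimpleGraph.connectedComponentMk _ ⟨x, hx⟩), rfl⟩

lemma edgeless_cc (h : ∀ a b, ¬ G.Adj a b) :
    Nat.card G.ConnectedComponent = Fintype.card V := by
  rw [← Nat.card_eq_fintype_card]
  refine (Nat.card_eq_of_bijective G.connectedComponentMk ⟨?_, ?_⟩).symm
  · intro a b hab
    obtain ⟨w⟩ := ConnectedComponent.eq.1 hab
    cases w with
    | nil => rfl
    | cons hadj _ => exact absurd hadj (h _ _)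
  · exact ConnectedComponent.ind (fun x => ⟨x, rfl⟩)

lemma cc_ne_of_edge {a b : V} (hadj : G.Adj a b) :
    Nat.card G.ConnectedComponent ≠ Fintype.card V := by
  classical
  letI : Fintype G.ConnectedComponent := Fintype.ofFinite _
  intro h
  rw [Nat.card_eq_fintype_card] at h
  have hsurj : Function.Surjective G.connectedComponentMk :=
    ConnectedComponent.ind (fun x => ⟨x, rfl⟩)
  have hbij : Function.Bijective G.connectedComponentMk :=
    (Fintype.bijective_iff_surjective_and_card _).2 ⟨hsurj, h.symm⟩
  exact hadj.ne (hbij.1 (ConnectedComponent.eq.2 hadj.reachable))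

lemma card_V'_eq (n : ℕ) (h : Fintype.card V = n + 1) : Fintype.card (V' v) = n := by
  have : Fintype.card (V' v) = Fintype.card V - 1 := by
    unfold V'
    rw [Fintype.card_subtype_compl (p := (· = v))]
    simp [Fintype.card_subtype_eq]
  omega

lemma exists_leaf (hG : G.IsAcyclic) (hedge : ∃ a b, G.Adj a b) :
    ∃ z u, G.Adj z u ∧ ∀ w, G.Adj z w → w = u := by
  classical
  obtain ⟨a₀, b₀, hab⟩ := hedge
  set S : Set ℕ := {n | ∃ a b : V, ∃ p : G.Walk a b, p.IsPath ∧ p.length = n} with hS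
  have h1S : 1 ∈ S := ⟨a₀, b₀, Walk.cons hab Walk.nil, by
      rw [Walk.cons_isPath_iff]
      exact ⟨Walk.IsPath.nil, by simp [hab.ne]⟩, rfl⟩
  have hbdd : BddAbove S := ⟨Fintype.card V, fun n hn => by
      obtain ⟨a, b, p, hp, rfl⟩ := hn
      exact hp.length_lt.le⟩
  have hNS : sSup S ∈ S := Nat.sSup_mem ⟨1, h1S⟩ hbdd
  have hN1 : 1 ≤ sSup S := le_csSup hbdd h1S
  obtain ⟨a, b, p, hp, hlen⟩ := hNS
  have hba : b ≠ a := by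
    rintro rfl
    rw [(Walk.isPath_iff_eq_nil (p := p)).1 hp] at hlen
    rw [← hlen] at hN1
    simp at hN1
  obtain ⟨u0, hadj, q', hq'⟩ := Walk.exists_eq_cons_of_ne hba p.reverse
  have hqpath' : (Walk.cons hadj q').IsPath := hq' ▸ hp.reverse
  have hq'path : q'.IsPath := (Walk.cons_isPath_iff _ _).1 hqpath' |>.1
  have hbq' : b ∉ q'.support := (Walk.cons_isPath_iff _ _).1 hqpath' |>.2
  refine ⟨b, u0, hadj, fun w hw => ?_⟩
  by_contra hne
  by_cases hws : w ∈ q'.support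
  · set t := q'.takeUntil w hws with ht
    have htpath : t.IsPath := hq'path.takeUntil hws
    have hbt : b ∉ t.support := fun hc => hbq' (Walk.support_takeUntil_subset _ hws hc)
    have hcyc : (Walk.cons hw (Walk.cons hadj t).reverse).IsCycle := by
      rw [Walk.cons_isCycle_iff]
      constructor
      · apply Walk.IsPath.reverse
        rw [Walk.cons_isPath_iff]
        exact ⟨htpath, hbt⟩
      · rw [Walk.edges_reverse, List.mem_reverse, Walk.edges_cons]
        intro hc
        rcases List.mem_cons.1 hc with hc | hc
        · exact hne (Sym2.congr_right.1 hc)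
        · exact hbt (Walk.fst_mem_support_of_mem_edges t hc)
    exact hG _ hcyc
  · have hwb : w ≠ b := fun h => G.irrefl (h ▸ hw)
    have hwsup : w ∉ (Walk.cons hadj q').support := by
      rw [Walk.support_cons]
      intro h
      rcases List.mem_cons.1 h with h1 | h1
      · exact hwb h1
      · exact hws h1
    have hext : (Walk.cons hw.symm (Walk.cons hadj q')).IsPath := by
      rw [Walk.cons_isPath_iff]
      exact ⟨hqpath', hwsup⟩
    have hlen2 : (Walk.cons hw.symm (Walk.cons hadj q')).length = sSup S + 1 := by
      have : p.reverse.length = p.length := Walk.length_reverse p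
      rw [hq'] at this
      simp only [Walk.length_cons] at this ⊢
      omega
    have : sSup S + 1 ∈ S := ⟨w, a, _, hext, hlen2⟩
    have := le_csSup hbdd this
    omega
end more

end master

def gfun : ℕ → ℕ → ℕ → ℕ
  | 0, _, k => if k = 0 then 1 else 0
  | _ + 1, _, 0 => 0
  | n + 1, c, k + 1 =>
    if c = n + 1 then (k + 1) * gfun n n (k + 1) + gfun n n k
    else k * gfun n c (k + 1) + gfun n c k

lemma graphStirling_empty {W : Type} [Fintype W] [DecidableEq W] [IsEmpty W]
    (G : SimpleGraph W) (k : ℕ) :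
    graphStirling G k = if k = 0 then 1 else 0 := by
  have hparts : ∀ P : Finpartition (univ : Finset W), P.parts = ∅ := by
    intro P
    rw [Finset.eq_empty_iff_forall_notMem]
    intro q hq
    obtain ⟨x, -⟩ := P.nonempty_of_mem_parts hq
    exact IsEmpty.false x
  rcases Nat.eq_zero_or_pos k with rfl | hk
  · rw [if_pos rfl, graphStirling, Nat.card_eq_one_iff_unique]
    constructor
    · constructor
      rintro ⟨P₁, -, -⟩ ⟨P₂, -, -⟩
      exact Subtype.ext (Finpartition.ext (by rw [hparts P₁, hparts P₂]))
    · have e : (⊥ : Finset W) = univ := by simp [Finset.univ_eq_empty]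
      exact ⟨(Finpartition.empty _).copy e, by simp [hparts], by
        intro p hp
        rw [hparts] at hp
        exact absurd hp (Finset.notMem_empty p)⟩
  · rw [if_neg (by omega), graphStirling, Nat.card_eq_zero]
    left
    rw [isEmpty_iff]
    rintro ⟨P, hcard, -⟩
    rw [hparts P] at hcard
    simp at hcard
    omega

lemma key : ∀ n : ℕ, ∀ (W : Type) [Fintype W] [DecidableEq W] (G : SimpleGraph W),
    G.IsAcyclic → Fintype.card W = n →
    ∀ k, graphStirling G k = gfun n (Nat.card G.ConnectedComponent) k := by
  intro n
  induction n with
  | zero =>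
    intro W _ _ G hG hcard k
    haveI : IsEmpty W := Fintype.card_eq_zero_iff.1 hcard
    rw [graphStirling_empty G k]
    rcases k with _ | k <;> simp [gfun]
  | succ n ih =>
    intro W _ _ G hG hcard k
    haveI : Nonempty W := Fintype.card_pos_iff.1 (by omega)
    by_cases hedge : ∃ a b, G.Adj a b
    · -- graph with an edge: use a leaf
      obtain ⟨v, u, hadj, huniq⟩ := exists_leaf G hG hedge
      set G' := SimpleGraph.comap (fun x : V' v => x.val) G with hG'
      have hG'acyc : G'.IsAcyclic := acyclic_comap G v hG
      have hG'card : Fintype.card (V' v) = n := card_V'_eq v n hcard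
      have hcc : Nat.card G.ConnectedComponent = Nat.card G'.ConnectedComponent :=
        cc_card_leaf G v hadj huniq
      have hne : Nat.card G.ConnectedComponent ≠ n + 1 := by
        rw [← hcard]; exact cc_ne_of_edge G hadj
      rcases k with _ | k
      · rw [graphStirling_zero_of_nonempty, gfun]
      · rw [graphStirling_leaf G v k hadj huniq,
          ih (V' v) G' hG'acyc hG'card k, ih (V' v) G' hG'acyc hG'card (k + 1)]
        rw [gfun, if_neg hne, ← hcc]
        ring
    · -- edgeless graph: every vertex is isolated
      push_neg at hedge
      have hcc : Nat.card G.ConnectedComponent = n + 1 := by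
        rw [edgeless_cc G hedge, hcard]
      obtain ⟨v⟩ := ‹Nonempty W›
      set G' := SimpleGraph.comap (fun x : V' v => x.val) G with hG'
      have hG'acyc : G'.IsAcyclic := acyclic_comap G v hG
      have hG'card : Fintype.card (V' v) = n := card_V'_eq v n hcard
      have hcc' : Nat.card G'.ConnectedComponent = n := by
        have := cc_card_isolated G v (fun w => hedge v w)
        rw [← hG'] at this
        omega
      rcases k with _ | k
      · rw [graphStirling_zero_of_nonempty, gfun]
      · rw [graphStirling_isolated G v k (fun w => hedge v w),
          ih (V' v) G' hG'acyc hG'card k, ih (V' v) G' hG'acyc hG'card (k + 1)]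
        rw [gfun, if_pos (by omega), hcc']
        ring

theorem forest_graphStirling_depends_only_on_n_c
    {V₁ V₂ : Type} [Fintype V₁] [DecidableEq V₁] [Fintype V₂] [DecidableEq V₂]
    (G₁ : SimpleGraph V₁) (G₂ : SimpleGraph V₂)
    (h₁ : G₁.IsAcyclic) (h₂ : G₂.IsAcyclic)
    (hn : Fintype.card V₁ = Fintype.card V₂)
    (hc : Nat.card G₁.ConnectedComponent = Nat.card G₂.ConnectedComponent)
    (k : ℕ) :
    graphStirling G₁ k = graphStirling G₂ k := by
  rw [key (Fintype.card V₁) V₁ G₁ h₁ rfl k, key (Fintype.card V₁) V₂ G₂ h₂ hn.symm k, hc]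
end
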